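/- arXiv:1709.05655 — 6 statements merged into one kernel-verified Lean document; each statement's English description precedes it below -/
import Mathlib

section
/- Suppose x : [0,T] → ℝ^n is a C¹ solution of x'(t) = A x(t) + B u(t) + Σ_{i=1}^m N_i x(t) u_i(t) with x(0) = 0, where u : [0,T] → ℝ^m is continuous with ‖u(t)‖₂ ≤ k for all t, and P is a symmetric positive definite matrix satisfying the Lyapunov-type matrix inequality (A + (k²/2)I)ᵀ P⁻¹ + P⁻¹ (A + (k²/2)I) + Σ_{i=1}^m N_iᵀ P⁻¹ N_i ≤ −P⁻¹ B Bᵀ P⁻¹ (in the Loewner order). Then for all t ∈ [0,T], x(t)ᵀ P⁻¹ x(t) ≤ ∫₀ᵗ ‖u(s)‖₂² ds. -/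
open Matrix BigOperators MeasureTheory intervalIntegral

lemma key_ineq {n m : ℕ} (k : ℝ)
    (A : Matrix (Fin n) (Fin n) ℝ) (B : Matrix (Fin n) (Fin m) ℝ)
    (N : Fin m → Matrix (Fin n) (Fin n) ℝ)
    (Q : Matrix (Fin n) (Fin n) ℝ) (hQ : Q.PosSemidef) (hQs : Qᵀ = Q)
    (hLyap : ((-(Q * B * Bᵀ * Q)) -
        ((A + (k ^ 2 / 2) • (1 : Matrix (Fin n) (Fin n) ℝ))ᵀ * Q +
          Q * (A + (k ^ 2 / 2) • (1 : Matrix (Fin n) (Fin n) ℝ)) +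
          ∑ i, (N i)ᵀ * Q * N i)).PosSemidef)
    (v : Fin n → ℝ) (w : Fin m → ℝ) (hw : w ⬝ᵥ w ≤ k ^ 2) :
    (A *ᵥ v + B *ᵥ w + ∑ i, w i • (N i *ᵥ v)) ⬝ᵥ Q *ᵥ v
      + v ⬝ᵥ Q *ᵥ (A *ᵥ v + B *ᵥ w + ∑ i, w i • (N i *ᵥ v)) ≤ w ⬝ᵥ w := by
  have symmQ : ∀ a b : Fin n → ℝ, a ⬝ᵥ Q *ᵥ b = b ⬝ᵥ Q *ᵥ a := by
    intro a b
    rw [dotProduct_comm, ← vecMul_transpose, ← dotProduct_mulVec, hQs]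
  have hQnn : ∀ a : Fin n → ℝ, 0 ≤ a ⬝ᵥ Q *ᵥ a := fun a => by simpa using hQ.dotProduct_mulVec_nonneg a
  have sum_mulVec : ∀ (f : Fin m → Matrix (Fin n) (Fin n) ℝ) (y : Fin n → ℝ),
      (∑ i, f i) *ᵥ y = ∑ i, f i *ᵥ y := by
    intro f y
    ext j
    simp [Matrix.mulVec, dotProduct, Matrix.sum_apply, Finset.sum_apply, Finset.sum_mul]
    rw [Finset.sum_comm]
  have mulVec_sum : ∀ (y : Fin m → Fin n → ℝ), Q *ᵥ (∑ i, y i) = ∑ i, Q *ᵥ y i := by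
    intro y
    ext j
    simp [Matrix.mulVec, dotProduct, Finset.sum_apply, Finset.mul_sum]
    rw [Finset.sum_comm]
  have dot_sum : ∀ (y : Fin m → Fin n → ℝ), v ⬝ᵥ (∑ i, y i) = ∑ i, v ⬝ᵥ y i := by
    intro y
    simp [dotProduct, Finset.sum_apply, Finset.mul_sum]
    rw [Finset.sum_comm]
  have selfnn : ∀ a : Fin m → ℝ, 0 ≤ a ⬝ᵥ a := fun a =>
    Finset.sum_nonneg fun i _ => mul_self_nonneg (a i)
  set V := v ⬝ᵥ Q *ᵥ v with hV
  set z := Bᵀ *ᵥ (Q *ᵥ v) with hz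
  have hBid : v ⬝ᵥ Q *ᵥ (B *ᵥ w) = z ⬝ᵥ w := by
    rw [symmQ, dotProduct_comm, dotProduct_mulVec, ← mulVec_transpose]
  have hB : 2 * (v ⬝ᵥ Q *ᵥ (B *ᵥ w)) ≤ w ⬝ᵥ w + z ⬝ᵥ z := by
    have h0 := selfnn (w - z)
    have hexp : (w - z) ⬝ᵥ (w - z) = w ⬝ᵥ w - 2 * (z ⬝ᵥ w) + z ⬝ᵥ z := by
      rw [sub_dotProduct, dotProduct_sub, dotProduct_sub, dotProduct_comm z w]
      ring
    rw [hexp] at h0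
    rw [hBid]
    linarith
  have hN : ∀ i, 2 * (w i * (v ⬝ᵥ Q *ᵥ (N i *ᵥ v))) ≤
      w i ^ 2 * V + (N i *ᵥ v) ⬝ᵥ Q *ᵥ (N i *ᵥ v) := by
    intro i
    have h0 := hQnn (w i • v - N i *ᵥ v)
    have hexp : (w i • v - N i *ᵥ v) ⬝ᵥ Q *ᵥ (w i • v - N i *ᵥ v)
        = w i ^ 2 * V - 2 * (w i * (v ⬝ᵥ Q *ᵥ (N i *ᵥ v)))
          + (N i *ᵥ v) ⬝ᵥ Q *ᵥ (N i *ᵥ v) := by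
      rw [Matrix.mulVec_sub, Matrix.mulVec_smul, dotProduct_sub, sub_dotProduct,
        sub_dotProduct, dotProduct_smul, dotProduct_smul, smul_dotProduct, smul_dotProduct,
        symmQ (N i *ᵥ v) v]
      simp only [smul_eq_mul, ← hV]
      ring
    rw [hexp] at h0
    linarith
  have t1 : v ⬝ᵥ (Q * B * Bᵀ * Q) *ᵥ v = z ⬝ᵥ z := by
    simp only [← Matrix.mulVec_mulVec]
    rw [symmQ, dotProduct_comm, dotProduct_mulVec, ← mulVec_transpose]
  have tA : v ⬝ᵥ (Aᵀ * Q) *ᵥ v = v ⬝ᵥ Q *ᵥ (A *ᵥ v) := by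
    rw [← Matrix.mulVec_mulVec, dotProduct_mulVec, vecMul_transpose, symmQ (A *ᵥ v) v]
  have t2 : v ⬝ᵥ ((A + (k ^ 2 / 2) • (1 : Matrix (Fin n) (Fin n) ℝ))ᵀ * Q) *ᵥ v
      = v ⬝ᵥ Q *ᵥ (A *ᵥ v) + k ^ 2 / 2 * V := by
    rw [Matrix.transpose_add, Matrix.transpose_smul, Matrix.transpose_one, Matrix.add_mul,
      Matrix.smul_mul, Matrix.one_mul, Matrix.add_mulVec, Matrix.smul_mulVec,
      dotProduct_add, dotProduct_smul, smul_eq_mul, tA, hV]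
  have t3 : v ⬝ᵥ (Q * (A + (k ^ 2 / 2) • (1 : Matrix (Fin n) (Fin n) ℝ))) *ᵥ v
      = v ⬝ᵥ Q *ᵥ (A *ᵥ v) + k ^ 2 / 2 * V := by
    rw [Matrix.mul_add, Matrix.mul_smul, Matrix.mul_one, Matrix.add_mulVec,
      Matrix.smul_mulVec, dotProduct_add, dotProduct_smul, smul_eq_mul,
      ← Matrix.mulVec_mulVec, hV]
  have t4 : v ⬝ᵥ (∑ i, (N i)ᵀ * Q * N i) *ᵥ v = ∑ i, (N i *ᵥ v) ⬝ᵥ Q *ᵥ (N i *ᵥ v) := by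
    rw [sum_mulVec, dot_sum]
    refine Finset.sum_congr rfl fun i _ => ?_
    rw [← Matrix.mulVec_mulVec, ← Matrix.mulVec_mulVec, dotProduct_mulVec, vecMul_transpose]
  have hL0 := hLyap.dotProduct_mulVec_nonneg v
  simp only [star_trivial] at hL0
  rw [Matrix.sub_mulVec, Matrix.neg_mulVec, Matrix.add_mulVec, Matrix.add_mulVec,
    dotProduct_sub, dotProduct_neg, dotProduct_add, dotProduct_add, t1, t2, t3, t4] at hL0
  rw [symmQ (A *ᵥ v + B *ᵥ w + ∑ i, w i • (N i *ᵥ v)) v]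
  have hgoal : v ⬝ᵥ Q *ᵥ (A *ᵥ v + B *ᵥ w + ∑ i, w i • (N i *ᵥ v))
      = v ⬝ᵥ Q *ᵥ (A *ᵥ v) + v ⬝ᵥ Q *ᵥ (B *ᵥ w)
        + ∑ i, w i * (v ⬝ᵥ Q *ᵥ (N i *ᵥ v)) := by
    rw [Matrix.mulVec_add, Matrix.mulVec_add, dotProduct_add, dotProduct_add, mulVec_sum,
      dot_sum]
    simp only [Matrix.mulVec_smul, dotProduct_smul, smul_eq_mul]
  rw [hgoal]
  have hsum : ∑ i, 2 * (w i * (v ⬝ᵥ Q *ᵥ (N i *ᵥ v)))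
      ≤ ∑ i, (w i ^ 2 * V + (N i *ᵥ v) ⬝ᵥ Q *ᵥ (N i *ᵥ v)) :=
    Finset.sum_le_sum fun i _ => hN i
  rw [Finset.sum_add_distrib, ← Finset.sum_mul] at hsum
  have hww : ∑ i, w i ^ 2 = w ⬝ᵥ w := by simp [dotProduct, sq]
  have hVnn : 0 ≤ V := hQnn v
  have hkV : (∑ i, w i ^ 2) * V ≤ k ^ 2 * V := by
    apply mul_le_mul_of_nonneg_right _ hVnn
    rw [hww]; exact hw
  have h2sum : ∑ i, 2 * (w i * (v ⬝ᵥ Q *ᵥ (N i *ᵥ v)))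
      = 2 * ∑ i, w i * (v ⬝ᵥ Q *ᵥ (N i *ᵥ v)) := by rw [Finset.mul_sum]
  rw [h2sum] at hsum
  linarith

lemma quad_hasDerivAt {n : ℕ} (Q : Matrix (Fin n) (Fin n) ℝ) (x : ℝ → Fin n → ℝ)
    (d : Fin n → ℝ) (t : ℝ) (hx : HasDerivAt x d t) :
    HasDerivAt (fun s => x s ⬝ᵥ Q *ᵥ x s) (d ⬝ᵥ Q *ᵥ x t + x t ⬝ᵥ Q *ᵥ d) t := by
  have hxi : ∀ i, HasDerivAt (fun s => x s i) (d i) t := fun i => hasDerivAt_pi.1 hx i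
  have h : HasDerivAt (fun s => ∑ i, x s i * ∑ j, Q i j * x s j)
      (∑ i, (d i * ∑ j, Q i j * x t j + x t i * ∑ j, Q i j * d j)) t := by
    apply HasDerivAt.fun_sum
    intro i _
    exact (hxi i).mul (HasDerivAt.fun_sum fun j _ => (hxi j).const_mul (Q i j))
  have heq : (fun s => x s ⬝ᵥ Q *ᵥ x s) = fun s => ∑ i, x s i * ∑ j, Q i j * x s j := by
    funext s
    simp [dotProduct, Matrix.mulVec]
  rw [heq]
  convert h using 1
  simp [dotProduct, Matrix.mulVec, Finset.sum_add_distrib]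

theorem stmt_2 {n m : ℕ} (T k : ℝ) (hT : 0 < T) (hk : 0 < k)
    (A : Matrix (Fin n) (Fin n) ℝ) (B : Matrix (Fin n) (Fin m) ℝ)
    (N : Fin m → Matrix (Fin n) (Fin n) ℝ)
    (P : Matrix (Fin n) (Fin n) ℝ) (hP : P.PosDef)
    (hLyap : ((-(P⁻¹ * B * Bᵀ * P⁻¹)) -
        ((A + (k ^ 2 / 2) • (1 : Matrix (Fin n) (Fin n) ℝ))ᵀ * P⁻¹ +
          P⁻¹ * (A + (k ^ 2 / 2) • (1 : Matrix (Fin n) (Fin n) ℝ)) +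
          ∑ i, (N i)ᵀ * P⁻¹ * N i)).PosSemidef)
    (u : ℝ → Fin m → ℝ) (hu : Continuous u)
    (hubd : ∀ t ∈ Set.Icc (0 : ℝ) T, Real.sqrt (∑ i, (u t i) ^ 2) ≤ k)
    (x : ℝ → Fin n → ℝ)
    (hx0 : x 0 = 0)
    (hx : ∀ t ∈ Set.Icc (0 : ℝ) T,
      HasDerivAt x (A *ᵥ x t + B *ᵥ u t + ∑ i, u t i • (N i *ᵥ x t)) t) :
    ∀ t ∈ Set.Icc (0 : ℝ) T,
      x t ⬝ᵥ P⁻¹ *ᵥ x t ≤ ∫ s in (0 : ℝ)..t, ∑ i, (u s i) ^ 2 := by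
  set Q := P⁻¹ with hQdef
  have hQpd : Q.PosDef := hP.inv
  have hQs : Qᵀ = Q := by simpa using hQpd.1.eq
  set d : ℝ → Fin n → ℝ := fun t => A *ᵥ x t + B *ᵥ u t + ∑ i, u t i • (N i *ᵥ x t) with hd
  have hf : Continuous fun s => ∑ i, (u s i) ^ 2 := by
    have hc : ∀ i, Continuous fun s => u s i := fun i => (continuous_apply i).comp hu
    exact continuous_finset_sum _ fun i _ => (hc i).pow 2
  set g : ℝ → ℝ := fun t => x t ⬝ᵥ Q *ᵥ x t - ∫ s in (0:ℝ)..t, ∑ i, (u s i) ^ 2 with hg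
  have hgder : ∀ t ∈ Set.Icc (0:ℝ) T,
      HasDerivAt g (d t ⬝ᵥ Q *ᵥ x t + x t ⬝ᵥ Q *ᵥ d t - ∑ i, (u t i) ^ 2) t := by
    intro t ht
    exact (quad_hasDerivAt Q x (d t) t (hx t ht)).sub
      ((hf.integral_hasStrictDerivAt 0 t).hasDerivAt)
  have hderiv_nonpos : ∀ t ∈ Set.Icc (0:ℝ) T,
      d t ⬝ᵥ Q *ᵥ x t + x t ⬝ᵥ Q *ᵥ d t - ∑ i, (u t i) ^ 2 ≤ 0 := by
    intro t ht
    have h2 : (0:ℝ) ≤ ∑ i, (u t i) ^ 2 := Finset.sum_nonneg fun i _ => sq_nonneg _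
    have hw : u t ⬝ᵥ u t ≤ k ^ 2 := by
      have h1 := hubd t ht
      have h3 := Real.sq_sqrt h2
      have h4 := Real.sqrt_nonneg (∑ i, (u t i) ^ 2)
      have : u t ⬝ᵥ u t = ∑ i, (u t i) ^ 2 := by simp [dotProduct, sq]
      nlinarith
    have key := key_ineq k A B N Q hQpd.posSemidef hQs hLyap (x t) (u t) hw
    have huu : ∑ i, (u t i) ^ 2 = u t ⬝ᵥ u t := by simp [dotProduct, sq]
    rw [huu]
    simp only [hd] at *
    linarith
  have hcont : ContinuousOn g (Set.Icc 0 T) := fun t ht =>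
    (hgder t ht).continuousAt.continuousWithinAt
  have hdiff : DifferentiableOn ℝ g (interior (Set.Icc (0:ℝ) T)) := by
    rw [interior_Icc]
    exact fun t ht => ((hgder t (Set.mem_Icc_of_Ioo ht)).differentiableAt).differentiableWithinAt
  have hanti : AntitoneOn g (Set.Icc 0 T) := by
    apply antitoneOn_of_deriv_nonpos (convex_Icc 0 T) hcont hdiff
    intro t ht
    rw [interior_Icc] at ht
    rw [(hgder t (Set.mem_Icc_of_Ioo ht)).deriv]
    exact hderiv_nonpos t (Set.mem_Icc_of_Ioo ht)
  intro t ht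
  have h0 : (0:ℝ) ∈ Set.Icc (0:ℝ) T := ⟨le_refl 0, hT.le⟩
  have hle := hanti h0 ht ht.1
  have hg0 : g 0 = 0 := by
    simp [hg, hx0, intervalIntegral.integral_same]
  rw [hg0] at hle
  simpa [hg, sub_nonpos] using hle
end

section
/- Let x : [0,T] → ℝ^n be a C¹ solution of x'(t) = A x(t) + Σ_{i=1}^m N_i x(t) u_i(t) (no B term) with x(0) = x₀, where u is continuous with ‖u(t)‖₂ ≤ k, and let Q be a symmetric positive semidefinite matrix satisfying (A + (k²/2)I)ᵀ Q + Q (A + (k²/2)I) + Σ_{i=1}^m N_iᵀ Q N_i = −Cᵀ C. Then ∫₀ᵀ ‖C x(t)‖₂² dt ≤ x₀ᵀ Q x₀. -/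
open Matrix BigOperators MeasureTheory intervalIntegral

private lemma hasDerivAt_dotP {n : ℕ} {x y : ℝ → Fin n → ℝ} {v w : Fin n → ℝ} {t : ℝ}
    (hx : HasDerivAt x v t) (hy : HasDerivAt y w t) :
    HasDerivAt (fun s => x s ⬝ᵥ y s) (v ⬝ᵥ y t + x t ⬝ᵥ w) t := by
  have h := HasDerivAt.fun_sum (u := Finset.univ)
    (fun i _ => ((hasDerivAt_pi.1 hx i).mul (hasDerivAt_pi.1 hy i)))
  simpa [dotProduct, Finset.sum_add_distrib] using h

private lemma hasDerivAt_mulVecP {n : ℕ} {x : ℝ → Fin n → ℝ} {v : Fin n → ℝ} {t : ℝ}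
    (M : Matrix (Fin n) (Fin n) ℝ) (hx : HasDerivAt x v t) :
    HasDerivAt (fun s => M *ᵥ x s) (M *ᵥ v) t := by
  refine hasDerivAt_pi.2 fun j => ?_
  simp only [Matrix.mulVec, dotProduct]
  exact HasDerivAt.fun_sum fun k _ => (hasDerivAt_pi.1 hx k).const_mul (M j k)

private lemma continuousOn_dotP {n : ℕ} {f g : ℝ → Fin n → ℝ} {s : Set ℝ}
    (hf : ContinuousOn f s) (hg : ContinuousOn g s) :
    ContinuousOn (fun t => f t ⬝ᵥ g t) s := by
  simp only [dotProduct]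
  exact continuousOn_finset_sum _ fun i _ =>
    (((continuous_apply i).comp_continuousOn hf).mul
      ((continuous_apply i).comp_continuousOn hg))

private lemma sum_dotP {n : ℕ} {ι : Type*} (s : Finset ι) (v : ι → Fin n → ℝ) (b : Fin n → ℝ) :
    (∑ i ∈ s, v i) ⬝ᵥ b = ∑ i ∈ s, v i ⬝ᵥ b := by
  simp only [dotProduct, Finset.sum_apply, Finset.sum_mul]
  exact Finset.sum_comm

private lemma sum_mulVecP {n : ℕ} {ι : Type*} (s : Finset ι) (M : ι → Matrix (Fin n) (Fin n) ℝ)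
    (v : Fin n → ℝ) : (∑ i ∈ s, M i) *ᵥ v = ∑ i ∈ s, (M i) *ᵥ v := by
  funext j
  simp only [Matrix.mulVec, dotProduct, Matrix.sum_apply, Finset.sum_mul,
    Finset.sum_apply]
  exact Finset.sum_comm

private lemma dotP_sum {n : ℕ} {ι : Type*} (s : Finset ι) (v : ι → Fin n → ℝ) (b : Fin n → ℝ) :
    b ⬝ᵥ (∑ i ∈ s, v i) = ∑ i ∈ s, b ⬝ᵥ v i := by
  rw [dotProduct_comm, sum_dotP]
  exact Finset.sum_congr rfl fun i _ => dotProduct_comm _ _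

private lemma transP {n p : ℕ} (M : Matrix (Fin p) (Fin n) ℝ) (a : Fin n → ℝ) (b : Fin p → ℝ) :
    a ⬝ᵥ (Mᵀ *ᵥ b) = (M *ᵥ a) ⬝ᵥ b := by
  rw [Matrix.dotProduct_mulVec, Matrix.vecMul_transpose]

theorem stmt_4 {n m p : ℕ} (T k : ℝ) (hT : 0 < T) (hk : 0 < k)
    (A : Matrix (Fin n) (Fin n) ℝ)
    (N : Fin m → Matrix (Fin n) (Fin n) ℝ)
    (C : Matrix (Fin p) (Fin n) ℝ)
    (Q : Matrix (Fin n) (Fin n) ℝ) (hQ : Q.PosSemidef)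
    (hLyap : (A + (k ^ 2 / 2) • (1 : Matrix (Fin n) (Fin n) ℝ))ᵀ * Q +
        Q * (A + (k ^ 2 / 2) • (1 : Matrix (Fin n) (Fin n) ℝ)) +
        ∑ i, (N i)ᵀ * Q * N i = -(Cᵀ * C))
    (u : ℝ → Fin m → ℝ) (hu : Continuous u)
    (hubd : ∀ t ∈ Set.Icc (0 : ℝ) T, Real.sqrt (∑ i, (u t i) ^ 2) ≤ k)
    (x₀ : Fin n → ℝ) (x : ℝ → Fin n → ℝ)
    (hx0 : x 0 = x₀)
    (hx : ∀ t ∈ Set.Icc (0 : ℝ) T,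
      HasDerivAt x (A *ᵥ x t + ∑ i, u t i • (N i *ᵥ x t)) t) :
    (∫ t in (0 : ℝ)..T, ∑ j, ((C *ᵥ x t) j) ^ 2) ≤ x₀ ⬝ᵥ Q *ᵥ x₀ := by
  -- basic facts about Q
  have hQs : Qᵀ = Q := by
    simpa [Matrix.conjTranspose_eq_transpose_of_trivial] using hQ.1.eq
  have hQpos : ∀ v : Fin n → ℝ, 0 ≤ v ⬝ᵥ Q *ᵥ v := fun v => by
    simpa using hQ.dotProduct_mulVec_nonneg v
  have hsym : ∀ a b : Fin n → ℝ, a ⬝ᵥ Q *ᵥ b = b ⬝ᵥ Q *ᵥ a := by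
    intro a b
    rw [Matrix.dotProduct_mulVec, ← Matrix.vecMul_transpose, hQs, dotProduct_comm]
  -- cleaned Lyapunov equation
  have hL2 : Aᵀ * Q + Q * A + k ^ 2 • Q + ∑ i, (N i)ᵀ * Q * N i = -(Cᵀ * C) := by
    rw [← hLyap]
    simp only [Matrix.transpose_add, Matrix.transpose_smul, Matrix.transpose_one,
      Matrix.add_mul, Matrix.mul_add, Matrix.smul_mul, Matrix.mul_smul,
      Matrix.one_mul, Matrix.mul_one]
    module
  set f : ℝ → Fin n → ℝ := fun t => A *ᵥ x t + ∑ i, u t i • (N i *ᵥ x t) with hf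
  set V : ℝ → ℝ := fun t => x t ⬝ᵥ Q *ᵥ x t with hV
  set D : ℝ → ℝ := fun t => f t ⬝ᵥ Q *ᵥ x t + x t ⬝ᵥ Q *ᵥ f t with hD
  set g : ℝ → ℝ := fun t => ∑ j, ((C *ᵥ x t) j) ^ 2 with hg
  have hVD : ∀ t ∈ Set.Icc (0 : ℝ) T, HasDerivAt V (D t) t := fun t ht =>
    hasDerivAt_dotP (hx t ht) (hasDerivAt_mulVecP Q (hx t ht))
  -- pointwise inequality : g t ≤ -D t
  have key : ∀ t ∈ Set.Icc (0 : ℝ) T, g t ≤ -D t := by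
    intro t ht
    set y := x t with hy
    -- quadratic form of g
    have hgq : g t = y ⬝ᵥ (Cᵀ * C) *ᵥ y := by
      simp only [hg]
      rw [← Matrix.mulVec_mulVec, transP]
      simp [dotProduct, sq, hy]
    -- expansion of D
    have hDexp : D t = y ⬝ᵥ (Aᵀ * Q + Q * A) *ᵥ y
        + ∑ i, 2 * u t i * ((N i *ᵥ y) ⬝ᵥ Q *ᵥ y) := by
      have hfy : f t ⬝ᵥ Q *ᵥ y
          = (A *ᵥ y) ⬝ᵥ Q *ᵥ y + ∑ i, u t i * ((N i *ᵥ y) ⬝ᵥ Q *ᵥ y) := by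
        simp only [hf, ← hy, add_dotProduct, sum_dotP, smul_dotProduct,
          smul_eq_mul]
      have h1 : y ⬝ᵥ (Aᵀ * Q + Q * A) *ᵥ y = 2 * ((A *ᵥ y) ⬝ᵥ Q *ᵥ y) := by
        rw [Matrix.add_mulVec, dotProduct_add, ← Matrix.mulVec_mulVec, transP,
          ← Matrix.mulVec_mulVec, hsym y (A *ᵥ y)]
        ring
      have h2 : (∑ i, 2 * u t i * ((N i *ᵥ y) ⬝ᵥ Q *ᵥ y))
          = (∑ i, u t i * ((N i *ᵥ y) ⬝ᵥ Q *ᵥ y))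
            + ∑ i, u t i * ((N i *ᵥ y) ⬝ᵥ Q *ᵥ y) := by
        rw [← Finset.sum_add_distrib]
        exact Finset.sum_congr rfl fun i _ => by ring
      simp only [hD]
      rw [hsym (x t) (f t), ← hy, hfy, h1, h2]
      ring
    -- Cauchy-Schwarz-type bound for each term
    have expand : ∀ (c : ℝ) (a : Fin n → ℝ),
        (c • y - a) ⬝ᵥ Q *ᵥ (c • y - a)
          = c ^ 2 * (y ⬝ᵥ Q *ᵥ y) - 2 * c * (a ⬝ᵥ Q *ᵥ y) + a ⬝ᵥ Q *ᵥ a := by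
      intro c a
      rw [sub_dotProduct, Matrix.mulVec_sub, dotProduct_sub,
        dotProduct_sub, smul_dotProduct, Matrix.mulVec_smul,
        dotProduct_smul, dotProduct_smul, smul_dotProduct,
        hsym a y]
      simp only [smul_eq_mul]
      ring
    have hterm : ∀ i, 2 * u t i * ((N i *ᵥ y) ⬝ᵥ Q *ᵥ y)
        ≤ u t i ^ 2 * (y ⬝ᵥ Q *ᵥ y) + (N i *ᵥ y) ⬝ᵥ Q *ᵥ (N i *ᵥ y) := by
      intro i
      have h0 := hQpos (u t i • y - N i *ᵥ y)
      rw [expand (u t i) (N i *ᵥ y)] at h0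
      linarith
    -- bound on control
    have hsum : ∑ i, u t i ^ 2 ≤ k ^ 2 := by
      have hnn : 0 ≤ ∑ i, u t i ^ 2 := Finset.sum_nonneg fun i _ => sq_nonneg _
      have := hubd t ht
      calc ∑ i, u t i ^ 2 = Real.sqrt (∑ i, u t i ^ 2) ^ 2 := (Real.sq_sqrt hnn).symm
        _ ≤ k ^ 2 := pow_le_pow_left₀ (Real.sqrt_nonneg _) this 2
    -- final quadratic-form identity
    have hfin : y ⬝ᵥ (Aᵀ * Q + Q * A) *ᵥ y + k ^ 2 * (y ⬝ᵥ Q *ᵥ y)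
        + ∑ i, (N i *ᵥ y) ⬝ᵥ Q *ᵥ (N i *ᵥ y) = -(g t) := by
      have hNi : ∀ i, (N i *ᵥ y) ⬝ᵥ Q *ᵥ (N i *ᵥ y) = y ⬝ᵥ ((N i)ᵀ * Q * N i) *ᵥ y := by
        intro i
        rw [← Matrix.mulVec_mulVec, ← Matrix.mulVec_mulVec, transP, Matrix.mulVec_mulVec]
      have : y ⬝ᵥ (Aᵀ * Q + Q * A + k ^ 2 • Q + ∑ i, (N i)ᵀ * Q * N i) *ᵥ y = -(g t) := by
        rw [hL2, hgq]
        simp [Matrix.neg_mulVec]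
      rw [← this]
      rw [Matrix.add_mulVec, Matrix.add_mulVec, dotProduct_add, dotProduct_add,
        sum_mulVecP, dotP_sum, Matrix.add_mulVec, Matrix.add_mulVec, dotProduct_add,
        dotProduct_add, Matrix.smul_mulVec, dotProduct_smul]
      simp only [smul_eq_mul]
      rw [Finset.sum_congr rfl fun i _ => (hNi i)]
    have hmul : (∑ i, u t i ^ 2) * (y ⬝ᵥ Q *ᵥ y) ≤ k ^ 2 * (y ⬝ᵥ Q *ᵥ y) :=
      mul_le_mul_of_nonneg_right hsum (hQpos y)
    have hsum2 : ∑ i, 2 * u t i * ((N i *ᵥ y) ⬝ᵥ Q *ᵥ y)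
        ≤ (∑ i, u t i ^ 2) * (y ⬝ᵥ Q *ᵥ y) + ∑ i, (N i *ᵥ y) ⬝ᵥ Q *ᵥ (N i *ᵥ y) := by
      rw [Finset.sum_mul]
      rw [← Finset.sum_add_distrib]
      exact Finset.sum_le_sum fun i _ => by
        have := hterm i; simpa using this
    rw [hDexp]
    linarith [hsum2, hmul, hfin]
  -- continuity
  have hxc : ContinuousOn x (Set.Icc 0 T) := fun t ht =>
    (hx t ht).continuousAt.continuousWithinAt
  have hfc : ContinuousOn f (Set.Icc 0 T) := by
    apply ContinuousOn.add
    · exact (continuous_const.matrix_mulVec continuous_id).comp_continuousOn hxc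
    · apply continuousOn_finset_sum
      intro i _
      exact ContinuousOn.smul ((continuous_apply i).comp hu).continuousOn
        ((continuous_const.matrix_mulVec continuous_id).comp_continuousOn hxc)
  have hQxc : ContinuousOn (fun t => Q *ᵥ x t) (Set.Icc 0 T) :=
    (continuous_const.matrix_mulVec continuous_id).comp_continuousOn hxc
  have hQfc : ContinuousOn (fun t => Q *ᵥ f t) (Set.Icc 0 T) :=
    (continuous_const.matrix_mulVec continuous_id).comp_continuousOn hfc
  have hDc : ContinuousOn D (Set.Icc 0 T) :=
    (continuousOn_dotP hfc hQxc).add (continuousOn_dotP hxc hQfc)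
  have hgc : ContinuousOn g (Set.Icc 0 T) := by
    apply continuousOn_finset_sum
    intro j _
    exact (((continuous_apply j).comp_continuousOn
      ((continuous_const.matrix_mulVec continuous_id).comp_continuousOn hxc))).pow 2
  have hDi : IntervalIntegrable D volume 0 T :=
    (hDc.mono (by rw [Set.uIcc_of_le hT.le])).intervalIntegrable
  have hgi : IntervalIntegrable g volume 0 T :=
    (hgc.mono (by rw [Set.uIcc_of_le hT.le])).intervalIntegrable
  -- FTC
  have hftc : ∫ t in (0:ℝ)..T, D t = V T - V 0 := by
    apply intervalIntegral.integral_eq_sub_of_hasDerivAt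
    · intro t ht
      exact hVD t (by rwa [Set.uIcc_of_le hT.le] at ht)
    · exact hDi
  have hVT : 0 ≤ V T := hQpos (x T)
  have hV0 : V 0 = x₀ ⬝ᵥ Q *ᵥ x₀ := by simp [hV, hx0]
  have hmono : (∫ t in (0:ℝ)..T, g t) ≤ ∫ t in (0:ℝ)..T, -D t := by
    apply intervalIntegral.integral_mono_on hT.le hgi hDi.neg
    intro t ht
    exact key t ht
  have : (∫ t in (0:ℝ)..T, -D t) = V 0 - V T := by
    rw [intervalIntegral.integral_neg, hftc]; ring
  calc (∫ t in (0:ℝ)..T, ∑ j, ((C *ᵥ x t) j) ^ 2) = ∫ t in (0:ℝ)..T, g t := rfl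
    _ ≤ V 0 - V T := by rw [← this]; exact hmono
    _ ≤ V 0 := by linarith
    _ = x₀ ⬝ᵥ Q *ᵥ x₀ := hV0
end

section
/- Let x : [0,T] → ℝ^n solve x'(t) = A x(t) + B u(t) + Σ_{i=1}^m N_i x(t) u_i(t) with x(0) = x₀, u continuous, and let Q₁ be symmetric positive semidefinite with Aᵀ Q₁ + Q₁ A + Σ_{i=1}^m N_iᵀ Q₁ N_i = −Cᵀ C. Then ∫₀ᵀ ‖C x(t)‖₂² dt ≤ x₀ᵀ Q₁ x₀ + 2∫₀ᵀ x(t)ᵀ Q₁ B u(t) dt + ∫₀ᵀ x(t)ᵀ Q₁ x(t) · ‖u(t)‖₂² dt. -/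
open Matrix BigOperators MeasureTheory intervalIntegral

section aux
variable {n m p : ℕ}

lemma symmQ (Q : Matrix (Fin n) (Fin n) ℝ) (hs : Qᵀ = Q) (v w : Fin n → ℝ) :
    v ⬝ᵥ Q *ᵥ w = w ⬝ᵥ Q *ᵥ v := by
  rw [dotProduct_mulVec, show v ᵥ* Q = Q *ᵥ v by rw [← hs, vecMul_transpose, hs],
    dotProduct_comm]

lemma amgmQ (Q : Matrix (Fin n) (Fin n) ℝ) (hs : Qᵀ = Q)
    (hpos : ∀ v : Fin n → ℝ, 0 ≤ v ⬝ᵥ Q *ᵥ v) (a b : Fin n → ℝ) :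
    2 * (a ⬝ᵥ Q *ᵥ b) ≤ a ⬝ᵥ Q *ᵥ a + b ⬝ᵥ Q *ᵥ b := by
  have h0 := hpos (a - b)
  rw [sub_dotProduct, mulVec_sub, dotProduct_sub, dotProduct_sub] at h0
  have hsym := symmQ Q hs a b
  linarith

lemma mulVec_sum' {k : ℕ} (Q : Matrix (Fin n) (Fin n) ℝ) (f : Fin k → Fin n → ℝ) :
    Q *ᵥ (∑ i, f i) = ∑ i, Q *ᵥ f i := by
  simp only [← mulVecLin_apply, map_sum]

lemma dotProduct_sum' {k : ℕ} (v : Fin n → ℝ) (f : Fin k → Fin n → ℝ) :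
    v ⬝ᵥ (∑ i, f i) = ∑ i, v ⬝ᵥ f i := by
  simp only [dotProduct, Finset.sum_apply, Finset.mul_sum]
  rw [Finset.sum_comm]

lemma sum_mulVec' {k : ℕ} (M : Fin k → Matrix (Fin n) (Fin n) ℝ) (v : Fin n → ℝ) :
    (∑ i, M i) *ᵥ v = ∑ i, M i *ᵥ v := by
  ext j
  simp only [mulVec, dotProduct, Finset.sum_apply, Matrix.sum_apply, Finset.sum_mul]
  rw [Finset.sum_comm]

lemma transQ (M Q : Matrix (Fin n) (Fin n) ℝ) (v : Fin n → ℝ) :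
    v ⬝ᵥ (Mᵀ * Q) *ᵥ v = (M *ᵥ v) ⬝ᵥ Q *ᵥ v := by
  rw [← mulVec_mulVec, dotProduct_mulVec v, vecMul_transpose]

lemma key (A : Matrix (Fin n) (Fin n) ℝ) (B : Matrix (Fin n) (Fin m) ℝ)
    (N : Fin m → Matrix (Fin n) (Fin n) ℝ) (C : Matrix (Fin p) (Fin n) ℝ)
    (Q : Matrix (Fin n) (Fin n) ℝ) (hs : Qᵀ = Q)
    (hpos : ∀ v : Fin n → ℝ, 0 ≤ v ⬝ᵥ Q *ᵥ v)
    (hLyap : Aᵀ * Q + Q * A + ∑ i, (N i)ᵀ * Q * N i = -(Cᵀ * C))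
    (v : Fin n → ℝ) (w : Fin m → ℝ) :
    (∑ j, ((C *ᵥ v) j) ^ 2) +
      ((A *ᵥ v + B *ᵥ w + ∑ i, w i • (N i *ᵥ v)) ⬝ᵥ Q *ᵥ v +
        v ⬝ᵥ Q *ᵥ (A *ᵥ v + B *ᵥ w + ∑ i, w i • (N i *ᵥ v))) ≤
      2 * (v ⬝ᵥ Q *ᵥ (B *ᵥ w)) + (v ⬝ᵥ Q *ᵥ v) * ∑ i, (w i) ^ 2 := by
  have hsq : (∑ j, ((C *ᵥ v) j) ^ 2) = v ⬝ᵥ (Cᵀ * C) *ᵥ v := by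
    rw [← mulVec_mulVec, dotProduct_mulVec, vecMul_transpose]
    simp [dotProduct, sq]
  have hL : (A *ᵥ v) ⬝ᵥ Q *ᵥ v + v ⬝ᵥ Q *ᵥ (A *ᵥ v) +
      ∑ i, (N i *ᵥ v) ⬝ᵥ Q *ᵥ (N i *ᵥ v) = -(v ⬝ᵥ (Cᵀ * C) *ᵥ v) := by
    have h := congrArg (fun M => v ⬝ᵥ M *ᵥ v) hLyap
    simp only [add_mulVec, dotProduct_add, neg_mulVec, dotProduct_neg,
      sum_mulVec', dotProduct_sum'] at h
    have e2 : v ⬝ᵥ (Q * A) *ᵥ v = v ⬝ᵥ Q *ᵥ (A *ᵥ v) := by rw [← mulVec_mulVec]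
    have e3 : ∀ i : Fin m, v ⬝ᵥ ((N i)ᵀ * Q * N i) *ᵥ v =
        (N i *ᵥ v) ⬝ᵥ Q *ᵥ (N i *ᵥ v) := fun i => by
      rw [mul_assoc, ← mulVec_mulVec, dotProduct_mulVec v, vecMul_transpose,
        ← mulVec_mulVec]
    rw [transQ, e2, Finset.sum_congr rfl fun i _ => e3 i] at h
    exact h
  have hD : (A *ᵥ v + B *ᵥ w + ∑ i, w i • (N i *ᵥ v)) ⬝ᵥ Q *ᵥ v +
      v ⬝ᵥ Q *ᵥ (A *ᵥ v + B *ᵥ w + ∑ i, w i • (N i *ᵥ v)) =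
      (A *ᵥ v) ⬝ᵥ Q *ᵥ v + v ⬝ᵥ Q *ᵥ (A *ᵥ v) + 2 * (v ⬝ᵥ Q *ᵥ (B *ᵥ w)) +
        2 * ∑ i, w i * (v ⬝ᵥ Q *ᵥ (N i *ᵥ v)) := by
    rw [symmQ Q hs (A *ᵥ v + B *ᵥ w + ∑ i, w i • (N i *ᵥ v)) v]
    rw [mulVec_add, mulVec_add, mulVec_sum', dotProduct_add, dotProduct_add,
      dotProduct_sum']
    simp only [mulVec_smul, dotProduct_smul, smul_eq_mul]
    rw [symmQ Q hs (A *ᵥ v) v]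
    ring
  have hiq : ∀ i : Fin m, 2 * (w i * (v ⬝ᵥ Q *ᵥ (N i *ᵥ v))) ≤
      (N i *ᵥ v) ⬝ᵥ Q *ᵥ (N i *ᵥ v) + (w i) ^ 2 * (v ⬝ᵥ Q *ᵥ v) := by
    intro i
    have h := amgmQ Q hs hpos (N i *ᵥ v) (w i • v)
    simp only [mulVec_smul, dotProduct_smul, smul_dotProduct, smul_eq_mul] at h
    rw [symmQ Q hs (N i *ᵥ v) v] at h
    nlinarith [h]
  have hsum : 2 * ∑ i, w i * (v ⬝ᵥ Q *ᵥ (N i *ᵥ v)) ≤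
      (∑ i, (N i *ᵥ v) ⬝ᵥ Q *ᵥ (N i *ᵥ v)) + (∑ i, (w i) ^ 2) * (v ⬝ᵥ Q *ᵥ v) := by
    rw [Finset.mul_sum, Finset.sum_mul, ← Finset.sum_add_distrib]
    exact Finset.sum_le_sum fun i _ => hiq i
  rw [hsq, hD]
  have hc : (v ⬝ᵥ Q *ᵥ v) * ∑ i, (w i) ^ 2 = (∑ i, (w i) ^ 2) * (v ⬝ᵥ Q *ᵥ v) := by ring
  rw [hc]
  linarith [hL, hsum]

end aux


lemma hasDerivAt_quadForm {n : ℕ} (Q : Matrix (Fin n) (Fin n) ℝ)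
    (f : ℝ → Fin n → ℝ) (f' : Fin n → ℝ) (t : ℝ) (hf : HasDerivAt f f' t) :
    HasDerivAt (fun s => f s ⬝ᵥ Q *ᵥ f s) (f' ⬝ᵥ Q *ᵥ f t + f t ⬝ᵥ Q *ᵥ f') t := by
  have hcoord : ∀ i, HasDerivAt (fun s => f s i) (f' i) t := fun i =>
    hasDerivAt_pi.1 hf i
  have h1 : HasDerivAt (fun s => ∑ i, f s i * ∑ j, Q i j * f s j)
      (∑ i, (f' i * ∑ j, Q i j * f t j + f t i * ∑ j, Q i j * f' j)) t :=
    HasDerivAt.fun_sum fun i _ => (hcoord i).mul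
      (HasDerivAt.fun_sum fun j _ => (hcoord j).const_mul (Q i j))
  have ef : (fun s => f s ⬝ᵥ Q *ᵥ f s) = fun s => ∑ i, f s i * ∑ j, Q i j * f s j := by
    funext s; simp [dotProduct, mulVec]
  have ev : f' ⬝ᵥ Q *ᵥ f t + f t ⬝ᵥ Q *ᵥ f' =
      ∑ i, (f' i * ∑ j, Q i j * f t j + f t i * ∑ j, Q i j * f' j) := by
    simp [dotProduct, mulVec, Finset.sum_add_distrib]
  rw [ef, ev]
  exact h1


theorem stmt_6 {n m p : ℕ} (T : ℝ) (hT : 0 < T)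
    (A : Matrix (Fin n) (Fin n) ℝ) (B : Matrix (Fin n) (Fin m) ℝ)
    (N : Fin m → Matrix (Fin n) (Fin n) ℝ)
    (C : Matrix (Fin p) (Fin n) ℝ)
    (Q₁ : Matrix (Fin n) (Fin n) ℝ) (hQ : Q₁.PosSemidef)
    (hLyap : Aᵀ * Q₁ + Q₁ * A + ∑ i, (N i)ᵀ * Q₁ * N i = -(Cᵀ * C))
    (u : ℝ → Fin m → ℝ) (hu : Continuous u)
    (x₀ : Fin n → ℝ) (x : ℝ → Fin n → ℝ)
    (hx0 : x 0 = x₀)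
    (hx : ∀ t ∈ Set.Icc (0 : ℝ) T,
      HasDerivAt x (A *ᵥ x t + B *ᵥ u t + ∑ i, u t i • (N i *ᵥ x t)) t) :
    (∫ t in (0 : ℝ)..T, ∑ j, ((C *ᵥ x t) j) ^ 2) ≤
      x₀ ⬝ᵥ Q₁ *ᵥ x₀ + 2 * (∫ t in (0 : ℝ)..T, x t ⬝ᵥ Q₁ *ᵥ (B *ᵥ u t)) +
        ∫ t in (0 : ℝ)..T, (x t ⬝ᵥ Q₁ *ᵥ x t) * ∑ i, (u t i) ^ 2 := by
  have hs : Q₁ᵀ = Q₁ := by simpa using hQ.1.eq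
  have hpos : ∀ v : Fin n → ℝ, 0 ≤ v ⬝ᵥ Q₁ *ᵥ v := fun v => by simpa using hQ.dotProduct_mulVec_nonneg v
  have hIcc : Set.uIcc (0 : ℝ) T = Set.Icc 0 T := Set.uIcc_of_le hT.le
  have hxc : ContinuousOn x (Set.Icc 0 T) := fun t ht =>
    (hx t ht).continuousAt.continuousWithinAt
  have hpair : ContinuousOn (fun t => (x t, u t)) (Set.Icc 0 T) :=
    hxc.prodMk hu.continuousOn
  -- continuity of the integrands
  have c1 : ContinuousOn (fun t => ∑ j, ((C *ᵥ x t) j) ^ 2) (Set.Icc 0 T) := by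
    simp only [mulVec, dotProduct, Finset.sum_apply]
    fun_prop
  have cD : ContinuousOn (fun t =>
      (A *ᵥ x t + B *ᵥ u t + ∑ i, u t i • (N i *ᵥ x t)) ⬝ᵥ Q₁ *ᵥ x t +
        x t ⬝ᵥ Q₁ *ᵥ (A *ᵥ x t + B *ᵥ u t + ∑ i, u t i • (N i *ᵥ x t)))
      (Set.Icc 0 T) := by
    simp only [mulVec, dotProduct, Finset.sum_apply, Pi.smul_apply, Pi.add_apply,
        smul_eq_mul]
    fun_prop
  have c2 : ContinuousOn (fun t => x t ⬝ᵥ Q₁ *ᵥ (B *ᵥ u t)) (Set.Icc 0 T) := by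
    simp only [mulVec, dotProduct, Finset.sum_apply]
    fun_prop
  have c3 : ContinuousOn (fun t => (x t ⬝ᵥ Q₁ *ᵥ x t) * ∑ i, (u t i) ^ 2)
      (Set.Icc 0 T) := by
    simp only [mulVec, dotProduct, Finset.sum_apply]
    fun_prop
  -- interval integrability
  have i1 : IntervalIntegrable (fun t => ∑ j, ((C *ᵥ x t) j) ^ 2) volume 0 T :=
    (hIcc ▸ c1).intervalIntegrable
  have iD : IntervalIntegrable (fun t =>
      (A *ᵥ x t + B *ᵥ u t + ∑ i, u t i • (N i *ᵥ x t)) ⬝ᵥ Q₁ *ᵥ x t +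
        x t ⬝ᵥ Q₁ *ᵥ (A *ᵥ x t + B *ᵥ u t + ∑ i, u t i • (N i *ᵥ x t))) volume 0 T :=
    (hIcc ▸ cD).intervalIntegrable
  have i2 : IntervalIntegrable (fun t => x t ⬝ᵥ Q₁ *ᵥ (B *ᵥ u t)) volume 0 T :=
    (hIcc ▸ c2).intervalIntegrable
  have i3 : IntervalIntegrable (fun t => (x t ⬝ᵥ Q₁ *ᵥ x t) * ∑ i, (u t i) ^ 2)
      volume 0 T := (hIcc ▸ c3).intervalIntegrable
  -- FTC
  have hderiv : ∀ t ∈ Set.uIcc (0 : ℝ) T,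
      HasDerivAt (fun s => x s ⬝ᵥ Q₁ *ᵥ x s)
        ((A *ᵥ x t + B *ᵥ u t + ∑ i, u t i • (N i *ᵥ x t)) ⬝ᵥ Q₁ *ᵥ x t +
          x t ⬝ᵥ Q₁ *ᵥ (A *ᵥ x t + B *ᵥ u t + ∑ i, u t i • (N i *ᵥ x t))) t := by
    intro t ht
    rw [hIcc] at ht
    exact hasDerivAt_quadForm Q₁ x _ t (hx t ht)
  have hFTC : (∫ t in (0 : ℝ)..T,
      ((A *ᵥ x t + B *ᵥ u t + ∑ i, u t i • (N i *ᵥ x t)) ⬝ᵥ Q₁ *ᵥ x t +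
        x t ⬝ᵥ Q₁ *ᵥ (A *ᵥ x t + B *ᵥ u t + ∑ i, u t i • (N i *ᵥ x t)))) =
      x T ⬝ᵥ Q₁ *ᵥ x T - x 0 ⬝ᵥ Q₁ *ᵥ x 0 :=
    intervalIntegral.integral_eq_sub_of_hasDerivAt hderiv iD
  -- pointwise inequality and monotonicity of the integral
  have hmono : (∫ t in (0 : ℝ)..T,
      ((∑ j, ((C *ᵥ x t) j) ^ 2) +
        ((A *ᵥ x t + B *ᵥ u t + ∑ i, u t i • (N i *ᵥ x t)) ⬝ᵥ Q₁ *ᵥ x t +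
          x t ⬝ᵥ Q₁ *ᵥ (A *ᵥ x t + B *ᵥ u t + ∑ i, u t i • (N i *ᵥ x t))))) ≤
      ∫ t in (0 : ℝ)..T,
        (2 * (x t ⬝ᵥ Q₁ *ᵥ (B *ᵥ u t)) + (x t ⬝ᵥ Q₁ *ᵥ x t) * ∑ i, (u t i) ^ 2) := by
    apply intervalIntegral.integral_mono_on hT.le (i1.add iD) ((i2.const_mul 2).add i3)
    intro t _
    exact key A B N C Q₁ hs hpos hLyap (x t) (u t)
  rw [intervalIntegral.integral_add i1 iD,
    intervalIntegral.integral_add (i2.const_mul 2) i3,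
    intervalIntegral.integral_const_mul, hFTC] at hmono
  have hT0 : 0 ≤ x T ⬝ᵥ Q₁ *ᵥ x T := hpos (x T)
  rw [hx0] at hmono
  linarith [hmono, hT0]
end

section
/- Let P = KKᵀ and Q = LLᵀ be Cholesky-type factorizations of symmetric positive definite matrices P, Q ∈ ℝ^{n×n}, and let KᵀL = VΣUᵀ be a singular value decomposition with Σ diagonal positive definite. Then T = Σ^{-1/2} Uᵀ Lᵀ is invertible with inverse T⁻¹ = K V Σ^{-1/2}, and T P Tᵀ = Σ = T⁻ᵀ Q T⁻¹; i.e., T is a balancing transformation making both transformed Gramians equal to the diagonal matrix Σ of Hankel singular values. -/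
open Matrix BigOperators

theorem stmt_9 {n : ℕ} (P Q K L V U : Matrix (Fin n) (Fin n) ℝ)
    (d : Fin n → ℝ) (hd : ∀ i, 0 < d i)
    (hP : P.PosDef) (hQ : Q.PosDef)
    (hK : IsUnit K.det) (hL : IsUnit L.det)
    (hPfac : P = K * Kᵀ) (hQfac : Q = L * Lᵀ)
    (hV : Vᵀ * V = 1) (hV' : V * Vᵀ = 1)
    (hU : Uᵀ * U = 1) (hU' : U * Uᵀ = 1)
    (hSVD : Kᵀ * L = V * Matrix.diagonal d * Uᵀ) :
    let Shi : Matrix (Fin n) (Fin n) ℝ := Matrix.diagonal fun i => (Real.sqrt (d i))⁻¹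
    let T : Matrix (Fin n) (Fin n) ℝ := Shi * Uᵀ * Lᵀ
    let Tinv : Matrix (Fin n) (Fin n) ℝ := K * V * Shi
    T * Tinv = 1 ∧ Tinv * T = 1 ∧
      T * P * Tᵀ = Matrix.diagonal d ∧ Tinvᵀ * Q * Tinv = Matrix.diagonal d := by
  intro Shi T Tinv
  have hsq : ∀ i, Real.sqrt (d i) * Real.sqrt (d i) = d i :=
    fun i => Real.mul_self_sqrt (hd i).le
  have hsn : ∀ i, Real.sqrt (d i) ≠ 0 :=
    fun i => ne_of_gt (Real.sqrt_pos.2 (hd i))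
  have hLK : Lᵀ * K = U * Matrix.diagonal d * Vᵀ := by
    have := congrArg Matrix.transpose hSVD
    simpa [Matrix.transpose_mul, Matrix.mul_assoc, Matrix.diagonal_transpose] using this
  have hUc : ∀ X : Matrix (Fin n) (Fin n) ℝ, Uᵀ * (U * X) = X := fun X => by
    rw [← Matrix.mul_assoc, hU, Matrix.one_mul]
  have hU'c : ∀ X : Matrix (Fin n) (Fin n) ℝ, U * (Uᵀ * X) = X := fun X => by
    rw [← Matrix.mul_assoc, hU', Matrix.one_mul]
  have hVc : ∀ X : Matrix (Fin n) (Fin n) ℝ, Vᵀ * (V * X) = X := fun X => by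
    rw [← Matrix.mul_assoc, hV, Matrix.one_mul]
  have hV'c : ∀ X : Matrix (Fin n) (Fin n) ℝ, V * (Vᵀ * X) = X := fun X => by
    rw [← Matrix.mul_assoc, hV', Matrix.one_mul]
  have e1 : ∀ i, (Real.sqrt (d i))⁻¹ * d i * (Real.sqrt (d i))⁻¹ = 1 := fun i => by
    have h := hsq i; field_simp
    rw [Real.sq_sqrt (hd i).le, div_self (hd i).ne']
  have e2 : ∀ i, (Real.sqrt (d i))⁻¹ * (d i * (d i * (Real.sqrt (d i))⁻¹)) = d i := fun i => by
    have h := hsq i; field_simp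
    rw [Real.sq_sqrt (hd i).le, sq, mul_div_assoc, div_self (hd i).ne', mul_one]
  have key1 : Shi * Matrix.diagonal d * Shi = 1 := by
    simp only [Shi, Matrix.diagonal_mul_diagonal]
    rw [funext e1, Matrix.diagonal_one]
  have key2 : Shi * (Matrix.diagonal d * (Matrix.diagonal d * Shi)) = Matrix.diagonal d := by
    simp only [Shi, Matrix.diagonal_mul_diagonal]
    exact congrArg Matrix.diagonal (funext e2)
  have hTT : T * Tinv = 1 := by
    have h1 : T * Tinv = Shi * (Uᵀ * ((Lᵀ * K) * (V * Shi))) := by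
      simp only [T, Tinv, Matrix.mul_assoc]
    rw [h1, hLK]
    have h2 : Uᵀ * (U * Matrix.diagonal d * Vᵀ * (V * Shi)) = Matrix.diagonal d * Shi := by
      simp [Matrix.mul_assoc, hUc, hVc]
    rw [h2, ← Matrix.mul_assoc, key1]
  have hTT' : Tinv * T = 1 := mul_eq_one_comm.mp hTT
  refine ⟨hTT, hTT', ?_, ?_⟩
  · have h1 : T * P * Tᵀ = Shi * (Uᵀ * ((Lᵀ * K) * ((Kᵀ * L) * (U * Shi)))) := by
      simp only [T, hPfac, Matrix.transpose_mul, Matrix.transpose_transpose,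
        Matrix.diagonal_transpose, Matrix.mul_assoc, Shi]
    rw [h1, hLK, hSVD]
    have h2 : Uᵀ * (U * Matrix.diagonal d * Vᵀ * (V * Matrix.diagonal d * Uᵀ * (U * Shi))) =
        Matrix.diagonal d * (Matrix.diagonal d * Shi) := by
      simp [Matrix.mul_assoc, hUc, hVc]
    rw [h2, key2]
  · have h1 : Tinvᵀ * Q * Tinv = Shi * (Vᵀ * ((Kᵀ * L) * ((Lᵀ * K) * (V * Shi)))) := by
      simp only [Tinv, hQfac, Matrix.transpose_mul, Matrix.transpose_transpose,
        Matrix.diagonal_transpose, Matrix.mul_assoc, Shi]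
    rw [h1, hLK, hSVD]
    have h2 : Vᵀ * (V * Matrix.diagonal d * Uᵀ * (U * Matrix.diagonal d * Vᵀ * (V * Shi))) =
        Matrix.diagonal d * (Matrix.diagonal d * Shi) := by
      simp [Matrix.mul_assoc, hUc, hVc]
    rw [h2, key2]
end

section
/- Let the bilinear system x' = Ax + Bu + Σ_{i=1}^m N_i x u_i, y = Cx with x(0) = 0 be balanced, i.e., there is a diagonal positive definite Σ = diag(Σ₁, σI) with Σ₁ ∈ ℝ^{r×r}, where the last block of Hankel singular values equals a single value σ > 0, and Σ satisfies both (A + (k²/2)I)ᵀ Σ⁻¹ + Σ⁻¹(A + (k²/2)I) + Σ N_iᵀ Σ⁻¹ N_i ≤ −Σ⁻¹BBᵀΣ⁻¹ and (A + (k²/2)I)ᵀ Σ + Σ(A + (k²/2)I) + Σ N_iᵀ Σ N_i ≤ −CᵀC. Let y_r = C₁ x_r be the output of the truncated system x_r' = A₁₁ x_r + B₁ u + Σ N_{i,11} x_r u_i, x_r(0) = 0. If ‖u(t)‖₂ ≤ k on [0,T], then (∫₀ᵀ ‖y(t) − y_r(t)‖₂² dt)^{1/2} ≤ 2σ (∫₀ᵀ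 ‖u(t)‖₂² dt)^{1/2}. -/
open Matrix BigOperators MeasureTheory intervalIntegral

namespace Stmt12

variable {n q : Type*} [Fintype n] [Fintype q] [DecidableEq n]

lemma dot_sym (M : Matrix n n ℝ) (hM : Mᵀ = M) (a b : n → ℝ) :
    a ⬝ᵥ M *ᵥ b = b ⬝ᵥ M *ᵥ a := by
  rw [dotProduct_mulVec, ← mulVec_transpose, hM, dotProduct_comm]

lemma hasDerivAt_quad (M : Matrix n n ℝ) {f : ℝ → n → ℝ} {f' : n → ℝ} {t : ℝ}
    (hf : HasDerivAt f f' t) :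
    HasDerivAt (fun τ => f τ ⬝ᵥ M *ᵥ f τ) (f' ⬝ᵥ M *ᵥ f t + f t ⬝ᵥ M *ᵥ f') t := by
  have hc : ∀ i, HasDerivAt (fun τ => f τ i) (f' i) t := hasDerivAt_pi.1 hf
  have h : HasDerivAt (fun τ => ∑ i, f τ i * ∑ j, M i j * f τ j)
      (∑ i, (f' i * (∑ j, M i j * f t j) + f t i * ∑ j, M i j * f' j)) t := by
    refine HasDerivAt.fun_sum fun i _ => ?_
    exact (hc i).mul (HasDerivAt.fun_sum fun j _ => (hc j).const_mul (M i j))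
  have e1 : (fun τ => f τ ⬝ᵥ M *ᵥ f τ) = fun τ => ∑ i, f τ i * ∑ j, M i j * f τ j := by
    funext τ; simp [dotProduct, mulVec]
  rw [e1]
  convert h using 1
  simp [dotProduct, mulVec, Finset.sum_add_distrib]

lemma sum_mulVec' {ι : Type*} (t : Finset ι) (X : ι → Matrix n n ℝ) (v : n → ℝ) :
    (∑ i ∈ t, X i) *ᵥ v = ∑ i ∈ t, X i *ᵥ v := by
  funext j
  simp [mulVec, dotProduct, Finset.sum_mul, Matrix.sum_apply]
  rw [Finset.sum_comm]

lemma mulVec_sum' {ι : Type*} (t : Finset ι) (M : Matrix n n ℝ) (w : ι → n → ℝ) :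
    M *ᵥ (∑ i ∈ t, w i) = ∑ i ∈ t, M *ᵥ w i := by
  funext j
  simp [mulVec, dotProduct, Finset.mul_sum, Finset.sum_apply]
  rw [Finset.sum_comm]

lemma dotProduct_sum' {ι : Type*} (t : Finset ι) (v : n → ℝ) (w : ι → n → ℝ) :
    v ⬝ᵥ (∑ i ∈ t, w i) = ∑ i ∈ t, v ⬝ᵥ w i := by
  simp [dotProduct, Finset.mul_sum, Finset.sum_apply]
  rw [Finset.sum_comm]

lemma quad_PtP (P : Matrix q n ℝ) (v : n → ℝ) :
    v ⬝ᵥ (Pᵀ * P) *ᵥ v = (P *ᵥ v) ⬝ᵥ (P *ᵥ v) := by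
  rw [← mulVec_mulVec, dotProduct_mulVec (v := v), vecMul_transpose]

lemma quad_mul_mul (P : Matrix n n ℝ) (M : Matrix n n ℝ) (v : n → ℝ) :
    v ⬝ᵥ (Pᵀ * M * P) *ᵥ v = (P *ᵥ v) ⬝ᵥ M *ᵥ (P *ᵥ v) := by
  rw [← mulVec_mulVec, ← mulVec_mulVec, dotProduct_mulVec (v := v), vecMul_transpose]

lemma psd_key {m : ℕ} (M R Amat : Matrix n n ℝ) (hM : Mᵀ = M)
    (N : Fin m → Matrix n n ℝ) (c : ℝ)
    (h : ((-R) - ((Amat + c • (1 : Matrix n n ℝ))ᵀ * M + M * (Amat + c • (1 : Matrix n n ℝ)) +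
      ∑ i, (N i)ᵀ * M * N i)).PosSemidef) (v : n → ℝ) :
    2 * (v ⬝ᵥ M *ᵥ (Amat *ᵥ v)) + (2 * c) * (v ⬝ᵥ M *ᵥ v) +
      ∑ i, ((N i *ᵥ v) ⬝ᵥ M *ᵥ (N i *ᵥ v)) ≤ - (v ⬝ᵥ R *ᵥ v) := by
  have h0 := h.dotProduct_mulVec_nonneg v
  simp only [star_trivial] at h0
  rw [sub_mulVec, neg_mulVec, dotProduct_sub, dotProduct_neg, sub_nonneg] at h0
  have e1 : v ⬝ᵥ ((Amat + c • (1 : Matrix n n ℝ))ᵀ * M) *ᵥ v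
      = v ⬝ᵥ M *ᵥ (Amat *ᵥ v) + c * (v ⬝ᵥ M *ᵥ v) := by
    rw [← mulVec_mulVec, dotProduct_mulVec (v := v), vecMul_transpose, add_mulVec,
      smul_mulVec, one_mulVec, add_dotProduct, smul_dotProduct, smul_eq_mul]
    rw [dot_sym M hM (Amat *ᵥ v) v]
  have e2 : v ⬝ᵥ (M * (Amat + c • (1 : Matrix n n ℝ))) *ᵥ v
      = v ⬝ᵥ M *ᵥ (Amat *ᵥ v) + c * (v ⬝ᵥ M *ᵥ v) := by
    rw [← mulVec_mulVec, add_mulVec, smul_mulVec, one_mulVec, mulVec_add,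
      mulVec_smul, dotProduct_add, dotProduct_smul, smul_eq_mul]
  have e3 : v ⬝ᵥ (∑ i, (N i)ᵀ * M * N i) *ᵥ v
      = ∑ i, ((N i *ᵥ v) ⬝ᵥ M *ᵥ (N i *ᵥ v)) := by
    rw [sum_mulVec', dotProduct_sum']
    exact Finset.sum_congr rfl fun i _ => quad_mul_mul (N i) M v
  rw [add_mulVec, add_mulVec, dotProduct_add, dotProduct_add, e1, e2, e3] at h0
  linarith

lemma cross_bound (M : Matrix n n ℝ) (hM : Mᵀ = M) {m : ℕ}
    (N : Fin m → Matrix n n ℝ) (uu : Fin m → ℝ) (k : ℝ) (h2 : ∑ i, uu i ^ 2 ≤ k ^ 2)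
    (hMpos : ∀ w, 0 ≤ w ⬝ᵥ M *ᵥ w) (v : n → ℝ) :
    ∑ i, 2 * uu i * (v ⬝ᵥ M *ᵥ (N i *ᵥ v)) ≤
      k ^ 2 * (v ⬝ᵥ M *ᵥ v) + ∑ i, (N i *ᵥ v) ⬝ᵥ M *ᵥ (N i *ᵥ v) := by
  have step : ∀ i, 2 * uu i * (v ⬝ᵥ M *ᵥ (N i *ᵥ v)) ≤
      uu i ^ 2 * (v ⬝ᵥ M *ᵥ v) + (N i *ᵥ v) ⬝ᵥ M *ᵥ (N i *ᵥ v) := by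
    intro i
    have h0 := hMpos (uu i • v - N i *ᵥ v)
    have hsym := dot_sym M hM (N i *ᵥ v) v
    have hexp : (uu i • v - N i *ᵥ v) ⬝ᵥ M *ᵥ (uu i • v - N i *ᵥ v) =
        uu i ^ 2 * (v ⬝ᵥ M *ᵥ v) - uu i * (v ⬝ᵥ M *ᵥ (N i *ᵥ v))
          - uu i * ((N i *ᵥ v) ⬝ᵥ M *ᵥ v) + (N i *ᵥ v) ⬝ᵥ M *ᵥ (N i *ᵥ v) := by
      simp [sub_dotProduct, dotProduct_sub, mulVec_sub, mulVec_smul, smul_dotProduct,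
        dotProduct_smul, smul_eq_mul]
      ring
    rw [hexp, hsym] at h0
    nlinarith [h0]
  calc ∑ i, 2 * uu i * (v ⬝ᵥ M *ᵥ (N i *ᵥ v))
      ≤ ∑ i, (uu i ^ 2 * (v ⬝ᵥ M *ᵥ v) + (N i *ᵥ v) ⬝ᵥ M *ᵥ (N i *ᵥ v)) :=
        Finset.sum_le_sum fun i _ => step i
    _ = (∑ i, uu i ^ 2) * (v ⬝ᵥ M *ᵥ v) + ∑ i, (N i *ᵥ v) ⬝ᵥ M *ᵥ (N i *ᵥ v) := by
        rw [Finset.sum_add_distrib, Finset.sum_mul]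
    _ ≤ k ^ 2 * (v ⬝ᵥ M *ᵥ v) + ∑ i, (N i *ᵥ v) ⬝ᵥ M *ᵥ (N i *ᵥ v) := by
        have := mul_le_mul_of_nonneg_right h2 (hMpos v)
        linarith

lemma bterm (b uv : q → ℝ) : 4 * (b ⬝ᵥ uv) ≤ 4 * (uv ⬝ᵥ uv) + b ⬝ᵥ b := by
  have h := Finset.sum_nonneg (fun i (_ : i ∈ Finset.univ) => sq_nonneg (2 * uv i - b i))
  have e : ∑ i, (2 * uv i - b i) ^ 2
      = 4 * (uv ⬝ᵥ uv) - 4 * (b ⬝ᵥ uv) + b ⬝ᵥ b := by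
    simp only [dotProduct, Finset.mul_sum, ← Finset.sum_add_distrib, ← Finset.sum_sub_distrib]
    exact Finset.sum_congr rfl fun i _ => by ring
  rw [e] at h
  linarith

lemma contOn_dot (M : Matrix n n ℝ) {f g : ℝ → n → ℝ} {s : Set ℝ}
    (hf : ContinuousOn f s) (hg : ContinuousOn g s) :
    ContinuousOn (fun t => f t ⬝ᵥ M *ᵥ g t) s := by
  have e : (fun t => f t ⬝ᵥ M *ᵥ g t) = fun t => ∑ i, f t i * ∑ j, M i j * g t j :=
    funext fun t => by simp [dotProduct, mulVec]
  rw [e]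
  refine continuousOn_finset_sum _ fun i _ => ?_
  exact ((continuous_apply i).comp_continuousOn hf).mul
    (continuousOn_finset_sum _ fun j _ =>
      (((continuous_apply j).comp_continuousOn hg).const_smul (M i j)).congr fun t _ => by
        simp [smul_eq_mul])

end Stmt12

namespace Stmt12B

variable {r s m : ℕ}

lemma mulVec_elim_left {γ : Type*} [Fintype γ] (M : Matrix γ (Fin r ⊕ Fin s) ℝ) (v : Fin r → ℝ) :
    M *ᵥ Sum.elim v 0 = M.submatrix id Sum.inl *ᵥ v := by
  funext j
  simp [mulVec, dotProduct, Fintype.sum_sum_type]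

lemma S_inv_eq (d₁ : Fin r → ℝ) (hd₁ : ∀ i, 0 < d₁ i) (sig : ℝ) (hsig : 0 < sig) :
    (Matrix.fromBlocks (Matrix.diagonal d₁) 0 0 (sig • (1 : Matrix (Fin s) (Fin s) ℝ)))⁻¹ =
      Matrix.fromBlocks (Matrix.diagonal fun i => (d₁ i)⁻¹) 0 0
        (sig⁻¹ • (1 : Matrix (Fin s) (Fin s) ℝ)) := by
  apply Matrix.inv_eq_right_inv
  rw [Matrix.fromBlocks_multiply]
  simp [Matrix.diagonal_mul_diagonal, Matrix.smul_mul, Matrix.mul_smul, smul_smul,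
    mul_inv_cancel₀ (hsig.ne'), ← Matrix.fromBlocks_one]
  constructor
  · rw [show (fun i => d₁ i * (d₁ i)⁻¹) = fun _ => (1 : ℝ) from
      funext fun i => mul_inv_cancel₀ (hd₁ i).ne']
    rfl
  · rw [inv_mul_cancel₀ hsig.ne', one_smul]

lemma S_transpose (d₁ : Fin r → ℝ) (sig : ℝ) :
    (Matrix.fromBlocks (Matrix.diagonal d₁) 0 0 (sig • (1 : Matrix (Fin s) (Fin s) ℝ)))ᵀ =
      Matrix.fromBlocks (Matrix.diagonal d₁) 0 0 (sig • (1 : Matrix (Fin s) (Fin s) ℝ)) := by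
  simp [Matrix.fromBlocks_transpose, Matrix.transpose_smul]

lemma S_mulVec_kappa (d₁ : Fin r → ℝ) (sig : ℝ) (g : Fin s → ℝ) :
    (Matrix.fromBlocks (Matrix.diagonal d₁) 0 0 (sig • (1 : Matrix (Fin s) (Fin s) ℝ))) *ᵥ
      Sum.elim (0 : Fin r → ℝ) g = Sum.elim (0 : Fin r → ℝ) (sig • g) := by
  funext j
  cases j <;>
    simp [mulVec, dotProduct, Fintype.sum_sum_type, Matrix.one_apply, Finset.mul_sum,
      mul_comm, Finset.sum_ite_eq]

lemma S_quad_nonneg (d₁ : Fin r → ℝ) (hd₁ : ∀ i, 0 < d₁ i) (sig : ℝ) (hsig : 0 < sig)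
    (v : Fin r ⊕ Fin s → ℝ) :
    0 ≤ v ⬝ᵥ (Matrix.fromBlocks (Matrix.diagonal d₁) 0 0
      (sig • (1 : Matrix (Fin s) (Fin s) ℝ))) *ᵥ v := by
  have e : v ⬝ᵥ (Matrix.fromBlocks (Matrix.diagonal d₁) 0 0
      (sig • (1 : Matrix (Fin s) (Fin s) ℝ))) *ᵥ v =
      (∑ i, d₁ i * v (Sum.inl i) ^ 2) + ∑ j, sig * v (Sum.inr j) ^ 2 := by
    simp [dotProduct, mulVec, Fintype.sum_sum_type, Matrix.one_apply, Matrix.diagonal,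
      Finset.mul_sum, Finset.sum_ite_eq]
    ring_nf
    congr 1 <;> exact Finset.sum_congr rfl fun i _ => by ring
  rw [e]
  have h1 : 0 ≤ ∑ i, d₁ i * v (Sum.inl i) ^ 2 :=
    Finset.sum_nonneg fun i _ => mul_nonneg (hd₁ i).le (sq_nonneg _)
  have h2 : 0 ≤ ∑ j, sig * v (Sum.inr j) ^ 2 :=
    Finset.sum_nonneg fun j _ => mul_nonneg hsig.le (sq_nonneg _)
  linarith

lemma dyn_minus (A : Matrix (Fin r ⊕ Fin s) (Fin r ⊕ Fin s) ℝ)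
    (B : Matrix (Fin r ⊕ Fin s) (Fin m) ℝ)
    (N : Fin m → Matrix (Fin r ⊕ Fin s) (Fin r ⊕ Fin s) ℝ)
    (xv : Fin r ⊕ Fin s → ℝ) (xrv : Fin r → ℝ) (uv : Fin m → ℝ) :
    (A *ᵥ xv + B *ᵥ uv + ∑ i, uv i • (N i *ᵥ xv)) -
      Sum.elim (A.toBlocks₁₁ *ᵥ xrv + B.submatrix Sum.inl id *ᵥ uv +
        ∑ i, uv i • ((N i).toBlocks₁₁ *ᵥ xrv)) 0
    = A *ᵥ (xv - Sum.elim xrv 0) + ∑ i, uv i • (N i *ᵥ (xv - Sum.elim xrv 0)) +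
      Sum.elim (0 : Fin r → ℝ) (A.toBlocks₂₁ *ᵥ xrv + B.submatrix Sum.inr id *ᵥ uv +
        ∑ i, uv i • ((N i).toBlocks₂₁ *ᵥ xrv)) := by
  funext j
  cases j <;>
  · simp [mulVec, dotProduct, Fintype.sum_sum_type, Matrix.toBlocks₁₁, Matrix.toBlocks₂₁,
      Finset.sum_apply, Pi.add_apply, Pi.sub_apply, Pi.smul_apply, smul_eq_mul,
      mul_sub, mul_add, Finset.sum_sub_distrib, Finset.sum_add_distrib]
    ring

lemma dyn_plus (A : Matrix (Fin r ⊕ Fin s) (Fin r ⊕ Fin s) ℝ)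
    (B : Matrix (Fin r ⊕ Fin s) (Fin m) ℝ)
    (N : Fin m → Matrix (Fin r ⊕ Fin s) (Fin r ⊕ Fin s) ℝ)
    (xv : Fin r ⊕ Fin s → ℝ) (xrv : Fin r → ℝ) (uv : Fin m → ℝ) :
    (A *ᵥ xv + B *ᵥ uv + ∑ i, uv i • (N i *ᵥ xv)) +
      Sum.elim (A.toBlocks₁₁ *ᵥ xrv + B.submatrix Sum.inl id *ᵥ uv +
        ∑ i, uv i • ((N i).toBlocks₁₁ *ᵥ xrv)) 0
    = A *ᵥ (xv + Sum.elim xrv 0) + ∑ i, uv i • (N i *ᵥ (xv + Sum.elim xrv 0)) +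
      (2 : ℝ) • (B *ᵥ uv) -
      Sum.elim (0 : Fin r → ℝ) (A.toBlocks₂₁ *ᵥ xrv + B.submatrix Sum.inr id *ᵥ uv +
        ∑ i, uv i • ((N i).toBlocks₂₁ *ᵥ xrv)) := by
  funext j
  cases j <;>
  · simp [mulVec, dotProduct, Fintype.sum_sum_type, Matrix.toBlocks₁₁, Matrix.toBlocks₂₁,
      Finset.sum_apply, Pi.add_apply, Pi.sub_apply, Pi.smul_apply, smul_eq_mul,
      mul_sub, mul_add, Finset.sum_sub_distrib, Finset.sum_add_distrib]
    ring

lemma dot_elim_right (v : Fin r ⊕ Fin s → ℝ) (h : Fin s → ℝ) :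
    v ⬝ᵥ Sum.elim (0 : Fin r → ℝ) h = ∑ j, v (Sum.inr j) * h j := by
  simp [dotProduct, Fintype.sum_sum_type]

lemma cont_mulVec {α β : Type*} [Fintype β] (M : Matrix α β ℝ) :
    Continuous fun w : β → ℝ => M *ᵥ w := by
  refine continuous_pi fun i => ?_
  simp only [Matrix.mulVec, dotProduct]
  exact continuous_finset_sum _ fun j _ => (continuous_const.mul (continuous_apply j))

lemma eVo_expand (S A : Matrix (Fin r ⊕ Fin s) (Fin r ⊕ Fin s) ℝ)
    (N : Fin m → Matrix (Fin r ⊕ Fin s) (Fin r ⊕ Fin s) ℝ)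
    (v : Fin r ⊕ Fin s → ℝ) (uu : Fin m → ℝ) (gg : Fin s → ℝ) (sig : ℝ)
    (hkap : S *ᵥ Sum.elim (0 : Fin r → ℝ) gg = Sum.elim (0 : Fin r → ℝ) (sig • gg)) :
    v ⬝ᵥ S *ᵥ (A *ᵥ v + ∑ i, uu i • (N i *ᵥ v) + Sum.elim (0 : Fin r → ℝ) gg)
      = v ⬝ᵥ S *ᵥ (A *ᵥ v) + ∑ i, uu i * (v ⬝ᵥ S *ᵥ (N i *ᵥ v)) +
        sig * ∑ j, v (Sum.inr j) * gg j := by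
  rw [mulVec_add, mulVec_add, dotProduct_add, dotProduct_add, Stmt12.mulVec_sum',
    Stmt12.dotProduct_sum', hkap, dot_elim_right]
  congr 1
  · congr 1
    refine Finset.sum_congr rfl fun i _ => ?_
    rw [mulVec_smul, dotProduct_smul, smul_eq_mul]
  · rw [Finset.mul_sum]
    exact Finset.sum_congr rfl fun j _ => by simp [smul_eq_mul]; ring

lemma eVp_expand {mm : ℕ} (S A : Matrix (Fin r ⊕ Fin s) (Fin r ⊕ Fin s) ℝ)
    (B : Matrix (Fin r ⊕ Fin s) (Fin mm) ℝ)
    (N : Fin m → Matrix (Fin r ⊕ Fin s) (Fin r ⊕ Fin s) ℝ)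
    (v : Fin r ⊕ Fin s → ℝ) (uu : Fin m → ℝ) (uv : Fin mm → ℝ) (gg : Fin s → ℝ) (sig : ℝ)
    (hkap : S *ᵥ Sum.elim (0 : Fin r → ℝ) gg = Sum.elim (0 : Fin r → ℝ) (sig • gg)) :
    v ⬝ᵥ S *ᵥ (A *ᵥ v + ∑ i, uu i • (N i *ᵥ v) + (2 : ℝ) • (B *ᵥ uv) -
        Sum.elim (0 : Fin r → ℝ) gg)
      = v ⬝ᵥ S *ᵥ (A *ᵥ v) + ∑ i, uu i * (v ⬝ᵥ S *ᵥ (N i *ᵥ v)) +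
        2 * (v ⬝ᵥ S *ᵥ (B *ᵥ uv)) - sig * ∑ j, v (Sum.inr j) * gg j := by
  rw [mulVec_sub, mulVec_add, mulVec_add, dotProduct_sub, dotProduct_add, dotProduct_add,
    Stmt12.mulVec_sum', Stmt12.dotProduct_sum', hkap, dot_elim_right]
  congr 1
  · congr 1
    · congr 1
      refine Finset.sum_congr rfl fun i _ => ?_
      rw [mulVec_smul, dotProduct_smul, smul_eq_mul]
    · rw [mulVec_smul, dotProduct_smul, smul_eq_mul]
  · rw [Finset.mul_sum]
    exact Finset.sum_congr rfl fun j _ => by simp [smul_eq_mul]; ring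

end Stmt12B

open Stmt12 Stmt12B

theorem stmt_12 {r s m p : ℕ} (T k sig : ℝ) (hT : 0 < T) (hk : 0 < k) (hsig : 0 < sig)
    (A : Matrix (Fin r ⊕ Fin s) (Fin r ⊕ Fin s) ℝ)
    (B : Matrix (Fin r ⊕ Fin s) (Fin m) ℝ)
    (N : Fin m → Matrix (Fin r ⊕ Fin s) (Fin r ⊕ Fin s) ℝ)
    (C : Matrix (Fin p) (Fin r ⊕ Fin s) ℝ)
    (d₁ : Fin r → ℝ) (hd₁ : ∀ i, 0 < d₁ i)
    -- balanced Gramian Σ = diag(Σ₁, σ I)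
    (S : Matrix (Fin r ⊕ Fin s) (Fin r ⊕ Fin s) ℝ)
    (hS : S = Matrix.fromBlocks (Matrix.diagonal d₁) 0 0 (sig • (1 : Matrix (Fin s) (Fin s) ℝ)))
    -- type II reachability inequality
    (hreach : ((-(S⁻¹ * B * Bᵀ * S⁻¹)) -
        ((A + (k ^ 2 / 2) • (1 : Matrix (Fin r ⊕ Fin s) (Fin r ⊕ Fin s) ℝ))ᵀ * S⁻¹ +
          S⁻¹ * (A + (k ^ 2 / 2) • (1 : Matrix (Fin r ⊕ Fin s) (Fin r ⊕ Fin s) ℝ)) +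
          ∑ i, (N i)ᵀ * S⁻¹ * N i)).PosSemidef)
    -- type II observability inequality
    (hobs : ((-(Cᵀ * C)) -
        ((A + (k ^ 2 / 2) • (1 : Matrix (Fin r ⊕ Fin s) (Fin r ⊕ Fin s) ℝ))ᵀ * S +
          S * (A + (k ^ 2 / 2) • (1 : Matrix (Fin r ⊕ Fin s) (Fin r ⊕ Fin s) ℝ)) +
          ∑ i, (N i)ᵀ * S * N i)).PosSemidef)
    (u : ℝ → Fin m → ℝ) (hu : Continuous u)
    (hubd : ∀ t ∈ Set.Icc (0 : ℝ) T, Real.sqrt (∑ i, (u t i) ^ 2) ≤ k)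
    -- full state
    (x : ℝ → (Fin r ⊕ Fin s) → ℝ) (hx0 : x 0 = 0)
    (hx : ∀ t ∈ Set.Icc (0 : ℝ) T,
      HasDerivAt x (A *ᵥ x t + B *ᵥ u t + ∑ i, u t i • (N i *ᵥ x t)) t)
    -- reduced state
    (xr : ℝ → Fin r → ℝ) (hxr0 : xr 0 = 0)
    (hxr : ∀ t ∈ Set.Icc (0 : ℝ) T,
      HasDerivAt xr (A.toBlocks₁₁ *ᵥ xr t + B.submatrix Sum.inl id *ᵥ u t +
        ∑ i, u t i • ((N i).toBlocks₁₁ *ᵥ xr t)) t) :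
    Real.sqrt (∫ t in (0 : ℝ)..T,
        ∑ j, ((C *ᵥ x t) j - (C.submatrix id Sum.inl *ᵥ xr t) j) ^ 2) ≤
      2 * sig * Real.sqrt (∫ t in (0 : ℝ)..T, ∑ i, (u t i) ^ 2) := by
  classical
  -- basic facts about S
  have hd₁inv : ∀ i, 0 < (fun i => (d₁ i)⁻¹) i := fun i => inv_pos.2 (hd₁ i)
  have hsiginv : 0 < sig⁻¹ := inv_pos.2 hsig
  have hSinv : S⁻¹ = Matrix.fromBlocks (Matrix.diagonal fun i => (d₁ i)⁻¹) 0 0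
      (sig⁻¹ • (1 : Matrix (Fin s) (Fin s) ℝ)) := by
    rw [hS]; exact S_inv_eq d₁ hd₁ sig hsig
  have hSsym : Sᵀ = S := by rw [hS]; exact S_transpose d₁ sig
  have hSinvsym : S⁻¹ᵀ = S⁻¹ := by rw [hSinv]; exact S_transpose _ _
  have hSpos : ∀ v, 0 ≤ v ⬝ᵥ S *ᵥ v := by rw [hS]; exact S_quad_nonneg d₁ hd₁ sig hsig
  have hSinvpos : ∀ v, 0 ≤ v ⬝ᵥ S⁻¹ *ᵥ v := by
    rw [hSinv]; exact S_quad_nonneg _ hd₁inv _ hsiginv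
  have hSkap : ∀ g : Fin s → ℝ, S *ᵥ Sum.elim (0 : Fin r → ℝ) g
      = Sum.elim (0 : Fin r → ℝ) (sig • g) := by
    rw [hS]; exact S_mulVec_kappa d₁ sig
  have hSinvkap : ∀ g : Fin s → ℝ, S⁻¹ *ᵥ Sum.elim (0 : Fin r → ℝ) g
      = Sum.elim (0 : Fin r → ℝ) (sig⁻¹ • g) := by
    rw [hSinv]; exact S_mulVec_kappa _ _
  -- the error/aggregate states
  set xm : ℝ → (Fin r ⊕ Fin s) → ℝ := fun τ => x τ - Sum.elim (xr τ) 0 with hxm_def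
  set xp : ℝ → (Fin r ⊕ Fin s) → ℝ := fun τ => x τ + Sum.elim (xr τ) 0 with hxp_def
  set gg : ℝ → Fin s → ℝ := fun τ => A.toBlocks₂₁ *ᵥ xr τ + B.submatrix Sum.inr id *ᵥ u τ +
    ∑ i, u τ i • ((N i).toBlocks₂₁ *ᵥ xr τ) with hgg_def
  set Dm : ℝ → (Fin r ⊕ Fin s) → ℝ := fun τ => A *ᵥ xm τ + ∑ i, u τ i • (N i *ᵥ xm τ) +
    Sum.elim (0 : Fin r → ℝ) (gg τ) with hDm_def
  set Dp : ℝ → (Fin r ⊕ Fin s) → ℝ := fun τ => A *ᵥ xp τ + ∑ i, u τ i • (N i *ᵥ xp τ) +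
    (2 : ℝ) • (B *ᵥ u τ) - Sum.elim (0 : Fin r → ℝ) (gg τ) with hDp_def
  set W : ℝ → ℝ := fun τ => xm τ ⬝ᵥ S *ᵥ xm τ + sig ^ 2 * (xp τ ⬝ᵥ S⁻¹ *ᵥ xp τ) with hW_def
  set W' : ℝ → ℝ := fun τ => 2 * (xm τ ⬝ᵥ S *ᵥ Dm τ) +
    sig ^ 2 * (2 * (xp τ ⬝ᵥ S⁻¹ *ᵥ Dp τ)) with hW'_def
  -- derivatives
  have hiota : ∀ t ∈ Set.Icc (0 : ℝ) T, HasDerivAt (fun τ => Sum.elim (xr τ) (0 : Fin s → ℝ))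
      (Sum.elim (A.toBlocks₁₁ *ᵥ xr t + B.submatrix Sum.inl id *ᵥ u t +
        ∑ i, u t i • ((N i).toBlocks₁₁ *ᵥ xr t)) (0 : Fin s → ℝ)) t := by
    intro t ht
    refine hasDerivAt_pi.2 fun j => ?_
    cases j with
    | inl i => simpa using hasDerivAt_pi.1 (hxr t ht) i
    | inr j => simpa using hasDerivAt_const t (0 : ℝ)
  have hxmD : ∀ t ∈ Set.Icc (0 : ℝ) T, HasDerivAt xm (Dm t) t := by
    intro t ht
    have h := (hx t ht).sub (hiota t ht)
    rw [dyn_minus A B N (x t) (xr t) (u t)] at h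
    exact h
  have hxpD : ∀ t ∈ Set.Icc (0 : ℝ) T, HasDerivAt xp (Dp t) t := by
    intro t ht
    have h := (hx t ht).add (hiota t ht)
    rw [dyn_plus A B N (x t) (xr t) (u t)] at h
    exact h
  have hWD : ∀ t ∈ Set.Icc (0 : ℝ) T, HasDerivAt W (W' t) t := by
    intro t ht
    have h1 : HasDerivAt (fun τ => xm τ ⬝ᵥ S *ᵥ xm τ) (2 * (xm t ⬝ᵥ S *ᵥ Dm t)) t := by
      have h := hasDerivAt_quad S (hxmD t ht)
      rw [dot_sym S hSsym (Dm t) (xm t)] at h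
      convert h using 1; ring
    have h2 : HasDerivAt (fun τ => xp τ ⬝ᵥ S⁻¹ *ᵥ xp τ) (2 * (xp t ⬝ᵥ S⁻¹ *ᵥ Dp t)) t := by
      have h := hasDerivAt_quad S⁻¹ (hxpD t ht)
      rw [dot_sym S⁻¹ hSinvsym (Dp t) (xp t)] at h
      convert h using 1; ring
    exact h1.add (HasDerivAt.const_mul (sig ^ 2) h2)
  -- pointwise bound
  have hupt : ∀ t ∈ Set.Icc (0 : ℝ) T, ∑ i, (u t i) ^ 2 ≤ k ^ 2 := by
    intro t ht
    have h0 : 0 ≤ ∑ i, (u t i) ^ 2 := Finset.sum_nonneg fun i _ => sq_nonneg _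
    calc ∑ i, (u t i) ^ 2 = Real.sqrt (∑ i, (u t i) ^ 2) ^ 2 := (Real.sq_sqrt h0).symm
      _ ≤ k ^ 2 := pow_le_pow_left₀ (Real.sqrt_nonneg _) (hubd t ht) 2
  have hpt : ∀ t ∈ Set.Icc (0 : ℝ) T,
      (∑ j, ((C *ᵥ xm t) j) ^ 2) + W' t ≤ 4 * sig ^ 2 * ∑ i, (u t i) ^ 2 := by
    intro t ht
    have hu2 := hupt t ht
    have hcr_eq : ∀ j, xm t (Sum.inr j) = x t (Sum.inr j) := fun j => by
      rw [hxm_def]; simp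
    have hcr_eq' : ∀ j, xp t (Sum.inr j) = x t (Sum.inr j) := fun j => by
      rw [hxp_def]; simp
    -- Vo bound
    have eVo : xm t ⬝ᵥ S *ᵥ Dm t = xm t ⬝ᵥ S *ᵥ (A *ᵥ xm t) +
        ∑ i, u t i * (xm t ⬝ᵥ S *ᵥ (N i *ᵥ xm t)) +
        sig * ∑ j, x t (Sum.inr j) * gg t j := by
      rw [hDm_def]
      rw [eVo_expand S A N (xm t) (u t) (gg t) sig (hSkap (gg t))]
      congr 2
      exact Finset.sum_congr rfl fun j _ => by rw [hcr_eq j]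
    have eVp : xp t ⬝ᵥ S⁻¹ *ᵥ Dp t = xp t ⬝ᵥ S⁻¹ *ᵥ (A *ᵥ xp t) +
        ∑ i, u t i * (xp t ⬝ᵥ S⁻¹ *ᵥ (N i *ᵥ xp t)) +
        2 * (xp t ⬝ᵥ S⁻¹ *ᵥ (B *ᵥ u t)) - sig⁻¹ * ∑ j, x t (Sum.inr j) * gg t j := by
      rw [hDp_def]
      rw [eVp_expand S⁻¹ A B N (xp t) (u t) (u t) (gg t) sig⁻¹ (hSinvkap (gg t))]
      congr 2
      exact Finset.sum_congr rfl fun j _ => by rw [hcr_eq' j]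
    -- observability inequality at xm t
    have hO := psd_key S (Cᵀ * C) A hSsym N (k ^ 2 / 2) hobs (xm t)
    rw [quad_PtP C (xm t)] at hO
    have hCsum : (C *ᵥ xm t) ⬝ᵥ (C *ᵥ xm t) = ∑ j, ((C *ᵥ xm t) j) ^ 2 := by
      simp [dotProduct, sq]
    rw [hCsum] at hO
    have hCr := cross_bound S hSsym N (u t) k hu2 hSpos (xm t)
    have hCr2 : ∑ i, 2 * u t i * (xm t ⬝ᵥ S *ᵥ (N i *ᵥ xm t))
        = 2 * ∑ i, u t i * (xm t ⬝ᵥ S *ᵥ (N i *ᵥ xm t)) := by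
      rw [Finset.mul_sum]; exact Finset.sum_congr rfl fun i _ => by ring
    rw [hCr2] at hCr
    have hVo : 2 * (xm t ⬝ᵥ S *ᵥ Dm t) ≤ - (∑ j, ((C *ᵥ xm t) j) ^ 2) +
        2 * sig * ∑ j, x t (Sum.inr j) * gg t j := by
      rw [eVo]; nlinarith [hO, hCr]
    -- reachability inequality at xp t
    have hR := psd_key S⁻¹ (S⁻¹ * B * Bᵀ * S⁻¹) A hSinvsym N (k ^ 2 / 2) hreach (xp t)
    have hRmat : S⁻¹ * B * Bᵀ * S⁻¹ = (Bᵀ * S⁻¹)ᵀ * (Bᵀ * S⁻¹) := by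
      rw [Matrix.transpose_mul, Matrix.transpose_transpose, hSinvsym, Matrix.mul_assoc]
    rw [hRmat, quad_PtP (Bᵀ * S⁻¹) (xp t), ← Matrix.mulVec_mulVec] at hR
    have hCrInv := cross_bound S⁻¹ hSinvsym N (u t) k hu2 hSinvpos (xp t)
    have hCrInv2 : ∑ i, 2 * u t i * (xp t ⬝ᵥ S⁻¹ *ᵥ (N i *ᵥ xp t))
        = 2 * ∑ i, u t i * (xp t ⬝ᵥ S⁻¹ *ᵥ (N i *ᵥ xp t)) := by
      rw [Finset.mul_sum]; exact Finset.sum_congr rfl fun i _ => by ring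
    rw [hCrInv2] at hCrInv
    have hbt := bterm (Bᵀ *ᵥ (S⁻¹ *ᵥ xp t)) (u t)
    have hbeq : xp t ⬝ᵥ S⁻¹ *ᵥ (B *ᵥ u t) = (Bᵀ *ᵥ (S⁻¹ *ᵥ xp t)) ⬝ᵥ u t := by
      rw [dotProduct_mulVec (v := xp t)]
      rw [show xp t ᵥ* S⁻¹ = S⁻¹ *ᵥ xp t by conv_lhs => rw [← hSinvsym, vecMul_transpose]]
      rw [dotProduct_mulVec, ← mulVec_transpose]
    have huu : u t ⬝ᵥ u t = ∑ i, (u t i) ^ 2 := by simp [dotProduct, sq]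
    rw [huu] at hbt
    have hVc : 2 * (xp t ⬝ᵥ S⁻¹ *ᵥ Dp t) ≤ 4 * (∑ i, (u t i) ^ 2) -
        2 * sig⁻¹ * ∑ j, x t (Sum.inr j) * gg t j := by
      rw [eVp, hbeq]; nlinarith [hR, hCrInv, hbt]
    -- combine
    have hmul := mul_le_mul_of_nonneg_left hVc (sq_nonneg sig)
    have hid : sig ^ 2 * (4 * (∑ i, (u t i) ^ 2) - 2 * sig⁻¹ * ∑ j, x t (Sum.inr j) * gg t j)
        = 4 * sig ^ 2 * (∑ i, (u t i) ^ 2) - 2 * sig * ∑ j, x t (Sum.inr j) * gg t j := by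
      field_simp
    rw [hid] at hmul
    rw [hW'_def]
    linarith [hVo, hmul]
  -- continuity
  have hcx : ContinuousOn x (Set.Icc 0 T) := fun t ht => ((hx t ht).continuousAt).continuousWithinAt
  have hcxr : ContinuousOn xr (Set.Icc 0 T) :=
    fun t ht => ((hxr t ht).continuousAt).continuousWithinAt
  have celim : Continuous (fun v : Fin r → ℝ => Sum.elim v (0 : Fin s → ℝ)) := by
    refine continuous_pi fun j => ?_
    cases j with
    | inl i => exact continuous_apply i
    | inr j => exact continuous_const
  have ckap : Continuous (fun h : Fin s → ℝ => Sum.elim (0 : Fin r → ℝ) h) := by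
    refine continuous_pi fun j => ?_
    cases j with
    | inl i => exact continuous_const
    | inr j => exact continuous_apply j
  have hcxm : ContinuousOn xm (Set.Icc 0 T) := by
    rw [hxm_def]; exact hcx.sub (celim.comp_continuousOn hcxr)
  have hcxp : ContinuousOn xp (Set.Icc 0 T) := by
    rw [hxp_def]; exact hcx.add (celim.comp_continuousOn hcxr)
  have hcu : ContinuousOn u (Set.Icc 0 T) := hu.continuousOn
  have hcgg : ContinuousOn gg (Set.Icc 0 T) := by
    rw [hgg_def]
    refine (((cont_mulVec _).comp_continuousOn hcxr).add
      ((cont_mulVec _).comp_continuousOn hcu)).add ?_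
    refine continuousOn_finset_sum _ fun i _ => ?_
    exact (((continuous_apply i).comp hu).continuousOn).smul
      ((cont_mulVec _).comp_continuousOn hcxr)
  have hcDm : ContinuousOn Dm (Set.Icc 0 T) := by
    rw [hDm_def]
    refine (((cont_mulVec A).comp_continuousOn hcxm).add ?_).add
      (ckap.comp_continuousOn hcgg)
    refine continuousOn_finset_sum _ fun i _ => ?_
    exact (((continuous_apply i).comp hu).continuousOn).smul
      ((cont_mulVec (N i)).comp_continuousOn hcxm)
  have hcDp : ContinuousOn Dp (Set.Icc 0 T) := by
    rw [hDp_def]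
    refine ((((cont_mulVec A).comp_continuousOn hcxp).add ?_).add
      (((cont_mulVec B).comp_continuousOn hcu).const_smul (2 : ℝ))).sub
      (ckap.comp_continuousOn hcgg)
    refine continuousOn_finset_sum _ fun i _ => ?_
    exact (((continuous_apply i).comp hu).continuousOn).smul
      ((cont_mulVec (N i)).comp_continuousOn hcxp)
  have hcW' : ContinuousOn W' (Set.Icc 0 T) := by
    rw [hW'_def]
    exact (continuousOn_const.mul (contOn_dot S hcxm hcDm)).add
      (continuousOn_const.mul (continuousOn_const.mul (contOn_dot S⁻¹ hcxp hcDp)))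
  have hcf1 : ContinuousOn (fun t => ∑ j, ((C *ᵥ xm t) j) ^ 2) (Set.Icc 0 T) := by
    refine continuousOn_finset_sum _ fun j _ => ?_
    exact (((continuous_apply j).comp (cont_mulVec C)).comp_continuousOn hcxm).pow 2
  have hcf2 : Continuous (fun t => ∑ i, (u t i) ^ 2) :=
    continuous_finset_sum _ fun i _ => ((continuous_apply i).comp hu).pow 2
  have huIcc : Set.uIcc (0 : ℝ) T = Set.Icc 0 T := Set.uIcc_of_le hT.le
  have hintW' : IntervalIntegrable W' MeasureTheory.volume 0 T :=
    (huIcc ▸ hcW' : ContinuousOn W' (Set.uIcc 0 T)).intervalIntegrable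
  have hintf1 : IntervalIntegrable (fun t => ∑ j, ((C *ᵥ xm t) j) ^ 2)
      MeasureTheory.volume 0 T :=
    (huIcc ▸ hcf1 : ContinuousOn _ (Set.uIcc 0 T)).intervalIntegrable
  have hintf2 : IntervalIntegrable (fun t => 4 * sig ^ 2 * ∑ i, (u t i) ^ 2)
      MeasureTheory.volume 0 T := (continuous_const.mul hcf2).intervalIntegrable 0 T
  -- FTC
  have hW0 : W 0 = 0 := by
    have hxm0 : xm 0 = 0 := by
      rw [hxm_def]; funext j; cases j <;> simp [hx0, hxr0]
    have hxp0 : xp 0 = 0 := by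
      rw [hxp_def]; funext j; cases j <;> simp [hx0, hxr0]
    rw [hW_def]
    simp only [hxm0, hxp0, Matrix.mulVec_zero, dotProduct_zero, mul_zero, add_zero]
  have hWT : 0 ≤ W T := add_nonneg (hSpos _) (mul_nonneg (sq_nonneg sig) (hSinvpos _))
  have hFTC : ∫ t in (0 : ℝ)..T, W' t = W T - W 0 :=
    intervalIntegral.integral_eq_sub_of_hasDerivAt
      (fun t ht => hWD t (huIcc ▸ ht)) hintW'
  have hmono : (∫ t in (0 : ℝ)..T, ∑ j, ((C *ᵥ xm t) j) ^ 2) ≤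
      ∫ t in (0 : ℝ)..T, (4 * sig ^ 2 * ∑ i, (u t i) ^ 2 - W' t) := by
    refine intervalIntegral.integral_mono_on hT.le hintf1 (hintf2.sub hintW') ?_
    intro t ht
    have := hpt t ht
    linarith
  have hsplit : (∫ t in (0 : ℝ)..T, (4 * sig ^ 2 * ∑ i, (u t i) ^ 2 - W' t)) =
      4 * sig ^ 2 * (∫ t in (0 : ℝ)..T, ∑ i, (u t i) ^ 2) - ∫ t in (0 : ℝ)..T, W' t := by
    rw [intervalIntegral.integral_sub hintf2 hintW', intervalIntegral.integral_const_mul]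
  have hkey : (∫ t in (0 : ℝ)..T, ∑ j, ((C *ᵥ xm t) j) ^ 2) ≤
      4 * sig ^ 2 * ∫ t in (0 : ℝ)..T, ∑ i, (u t i) ^ 2 := by
    rw [hsplit, hFTC] at hmono
    linarith
  have hint2 : 0 ≤ ∫ t in (0 : ℝ)..T, ∑ i, (u t i) ^ 2 :=
    intervalIntegral.integral_nonneg hT.le fun t _ => Finset.sum_nonneg fun i _ => sq_nonneg _
  -- rewrite the goal
  have hre : (∫ t in (0 : ℝ)..T,
      ∑ j, ((C *ᵥ x t) j - (C.submatrix id Sum.inl *ᵥ xr t) j) ^ 2) =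
      ∫ t in (0 : ℝ)..T, ∑ j, ((C *ᵥ xm t) j) ^ 2 := by
    refine intervalIntegral.integral_congr fun t _ => ?_
    refine Finset.sum_congr rfl fun j _ => ?_
    have hce : C *ᵥ xm t = C *ᵥ x t - C.submatrix id Sum.inl *ᵥ xr t := by
      rw [hxm_def]
      rw [Matrix.mulVec_sub, mulVec_elim_left]
    rw [hce]
    simp
  rw [hre]
  calc Real.sqrt (∫ t in (0 : ℝ)..T, ∑ j, ((C *ᵥ xm t) j) ^ 2)
      ≤ Real.sqrt (4 * sig ^ 2 * ∫ t in (0 : ℝ)..T, ∑ i, (u t i) ^ 2) :=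
        Real.sqrt_le_sqrt hkey
    _ = 2 * sig * Real.sqrt (∫ t in (0 : ℝ)..T, ∑ i, (u t i) ^ 2) := by
        rw [show 4 * sig ^ 2 * (∫ t in (0 : ℝ)..T, ∑ i, (u t i) ^ 2) =
          (2 * sig) ^ 2 * ∫ t in (0 : ℝ)..T, ∑ i, (u t i) ^ 2 by ring,
          Real.sqrt_mul (sq_nonneg _), Real.sqrt_sq (by positivity)]
end

section
/- Let Σ = diag(Σ₁, Σ₂) be the balanced type II Gramian satisfying the reachability and observability Lyapunov inequalities with constant k for the partitioned bilinear system. If the full system satisfies them, then the reduced (truncated) system of dimension r also satisfies the corresponding inequalities: A₁₁ᵀ Σ₁⁻¹ + Σ₁⁻¹ A₁₁ + Σ_{i=1}^m N_{i,11}ᵀ Σ₁⁻¹ N_{i,11} + k² Σ₁⁻¹ ≤ −Σ₁⁻¹ B₁ B₁ᵀ Σ₁⁻¹ and A₁₁ᵀ Σ₁ + Σ₁ A₁₁ + Σ_{i=1}^m N_{i,11}ᵀ Σ₁ N_{i,11} + k² Σ₁ ≤ −C₁ᵀ C₁. -/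
open Matrix BigOperators

theorem stmt_15 {r s m p : ℕ} (k : ℝ) (hk : 0 < k)
    (A : Matrix (Fin r ⊕ Fin s) (Fin r ⊕ Fin s) ℝ)
    (B : Matrix (Fin r ⊕ Fin s) (Fin m) ℝ)
    (N : Fin m → Matrix (Fin r ⊕ Fin s) (Fin r ⊕ Fin s) ℝ)
    (C : Matrix (Fin p) (Fin r ⊕ Fin s) ℝ)
    (d₁ : Fin r → ℝ) (hd₁ : ∀ i, 0 < d₁ i)
    (d₂ : Fin s → ℝ) (hd₂ : ∀ i, 0 < d₂ i)
    (S : Matrix (Fin r ⊕ Fin s) (Fin r ⊕ Fin s) ℝ)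
    (hS : S = Matrix.fromBlocks (Matrix.diagonal d₁) 0 0 (Matrix.diagonal d₂))
    -- full-system reachability inequality
    (hreach : ((-(S⁻¹ * B * Bᵀ * S⁻¹)) -
        (Aᵀ * S⁻¹ + S⁻¹ * A + (∑ i, (N i)ᵀ * S⁻¹ * N i) + k ^ 2 • S⁻¹)).PosSemidef)
    -- full-system observability inequality
    (hobs : ((-(Cᵀ * C)) -
        (Aᵀ * S + S * A + (∑ i, (N i)ᵀ * S * N i) + k ^ 2 • S)).PosSemidef) :
    ((-((Matrix.diagonal d₁)⁻¹ * (B.submatrix Sum.inl id) * (B.submatrix Sum.inl id)ᵀ *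
          (Matrix.diagonal d₁)⁻¹)) -
        ((A.toBlocks₁₁)ᵀ * (Matrix.diagonal d₁)⁻¹ + (Matrix.diagonal d₁)⁻¹ * A.toBlocks₁₁ +
          (∑ i, ((N i).toBlocks₁₁)ᵀ * (Matrix.diagonal d₁)⁻¹ * (N i).toBlocks₁₁) +
          k ^ 2 • (Matrix.diagonal d₁)⁻¹)).PosSemidef ∧
    ((-((C.submatrix id Sum.inl)ᵀ * (C.submatrix id Sum.inl))) -
        ((A.toBlocks₁₁)ᵀ * Matrix.diagonal d₁ + Matrix.diagonal d₁ * A.toBlocks₁₁ +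
          (∑ i, ((N i).toBlocks₁₁)ᵀ * Matrix.diagonal d₁ * (N i).toBlocks₁₁) +
          k ^ 2 • Matrix.diagonal d₁)).PosSemidef := by
  have hS' : S = Matrix.diagonal (Sum.elim d₁ d₂) := by
    rw [hS, Matrix.fromBlocks_diagonal]
  have hSinv : S⁻¹ = Matrix.diagonal (Sum.elim (fun i => (d₁ i)⁻¹) (fun i => (d₂ i)⁻¹)) := by
    rw [hS']
    apply Matrix.inv_eq_right_inv
    ext x y
    rcases x with x | x <;> rcases y with y | y <;>
      simp only [Matrix.diagonal_mul_diagonal, Matrix.diagonal_apply, Matrix.one_apply,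
        Sum.elim_inl, Sum.elim_inr, Pi.mul_apply, Sum.inl.injEq, Sum.inr.injEq,
        reduceCtorEq, if_false] <;>
      split_ifs with h <;>
      simp_all [mul_inv_cancel₀ (hd₁ _).ne', mul_inv_cancel₀ (hd₂ _).ne']
  have hd1inv : (Matrix.diagonal d₁)⁻¹ = Matrix.diagonal (fun i => (d₁ i)⁻¹) := by
    apply Matrix.inv_eq_right_inv
    ext x y
    simp only [Matrix.diagonal_mul_diagonal, Matrix.diagonal_apply, Matrix.one_apply,
      Pi.mul_apply]
    split_ifs with h <;> simp_all [mul_inv_cancel₀ (hd₁ _).ne']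
  have hP2 : (Matrix.diagonal (fun j => (d₂ j)⁻¹) : Matrix (Fin s) (Fin s) ℝ).PosSemidef :=
    Matrix.posSemidef_diagonal_iff.mpr fun j => (inv_nonneg.mpr (hd₂ j).le)
  have hP2' : (Matrix.diagonal d₂ : Matrix (Fin s) (Fin s) ℝ).PosSemidef :=
    Matrix.posSemidef_diagonal_iff.mpr fun j => (hd₂ j).le
  have key1 :
      (-((Matrix.diagonal d₁)⁻¹ * (B.submatrix Sum.inl id) * (B.submatrix Sum.inl id)ᵀ *
          (Matrix.diagonal d₁)⁻¹)) -
        ((A.toBlocks₁₁)ᵀ * (Matrix.diagonal d₁)⁻¹ + (Matrix.diagonal d₁)⁻¹ * A.toBlocks₁₁ +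
          (∑ i, ((N i).toBlocks₁₁)ᵀ * (Matrix.diagonal d₁)⁻¹ * (N i).toBlocks₁₁) +
          k ^ 2 • (Matrix.diagonal d₁)⁻¹) =
      (((-(S⁻¹ * B * Bᵀ * S⁻¹)) -
        (Aᵀ * S⁻¹ + S⁻¹ * A + (∑ i, (N i)ᵀ * S⁻¹ * N i) + k ^ 2 • S⁻¹)).submatrix Sum.inl Sum.inl)
      + ∑ i, ((N i).toBlocks₂₁)ᵀ * (Matrix.diagonal (fun j => (d₂ j)⁻¹)) * (N i).toBlocks₂₁ := by
    rw [hSinv, hd1inv]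
    ext i j
    simp [Matrix.mul_apply, Matrix.diagonal_apply, Fintype.sum_sum_type, Matrix.toBlocks₁₁,
      Matrix.toBlocks₂₁, Matrix.sum_apply, Finset.sum_add_distrib, Finset.mul_sum,
      Finset.sum_mul, mul_comm, Finset.sum_ite_eq, Finset.sum_ite_eq']
    ring
  have key2 :
      (-((C.submatrix id Sum.inl)ᵀ * (C.submatrix id Sum.inl))) -
        ((A.toBlocks₁₁)ᵀ * Matrix.diagonal d₁ + Matrix.diagonal d₁ * A.toBlocks₁₁ +
          (∑ i, ((N i).toBlocks₁₁)ᵀ * Matrix.diagonal d₁ * (N i).toBlocks₁₁) +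
          k ^ 2 • Matrix.diagonal d₁) =
      (((-(Cᵀ * C)) -
        (Aᵀ * S + S * A + (∑ i, (N i)ᵀ * S * N i) + k ^ 2 • S)).submatrix Sum.inl Sum.inl)
      + ∑ i, ((N i).toBlocks₂₁)ᵀ * (Matrix.diagonal d₂) * (N i).toBlocks₂₁ := by
    rw [hS']
    ext i j
    simp [Matrix.mul_apply, Matrix.diagonal_apply, Fintype.sum_sum_type, Matrix.toBlocks₁₁,
      Matrix.toBlocks₂₁, Matrix.sum_apply, Finset.sum_add_distrib, Finset.mul_sum,
      Finset.sum_mul, mul_comm, Finset.sum_ite_eq, Finset.sum_ite_eq']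
    ring
  constructor
  · rw [key1]
    exact (hreach.submatrix Sum.inl).add <| Finset.sum_induction _ _ (fun a b ha hb => ha.add hb)
      (Matrix.PosSemidef.zero) fun i _ => by
        simpa using hP2.conjTranspose_mul_mul_same ((N i).toBlocks₂₁)
  · rw [key2]
    exact (hobs.submatrix Sum.inl).add <| Finset.sum_induction _ _ (fun a b ha hb => ha.add hb)
      (Matrix.PosSemidef.zero) fun i _ => by
        simpa using hP2'.conjTranspose_mul_mul_same ((N i).toBlocks₂₁)
end
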